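/- arXiv:2410.08101 — 11 statements merged into one kernel-verified Lean document; each statement's English description precedes it below -/
import Mathlib

section
/- Let H and K be complex inner product spaces and let A : H → K be a real-linear mapping with dense image that preserves orthogonality (i.e., ⟨x|y⟩ = 0 implies ⟨A x | A y⟩ = 0). Then for every norm-one element x₀ ∈ H, we have A(ℂ x₀) ⊆ ℂ A(x₀). -/
theorem stmt_0 {H K : Type*} [NormedAddCommGroup H] [InnerProductSpace ℂ H]
    [NormedAddCommGroup K] [InnerProductSpace ℂ K]
    (A : H → K)
    (hadd : ∀ x y, A (x + y) = A x + A y)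
    (hreal : ∀ (t : ℝ) (x : H), A (t • x) = t • A x)
    (hdense : DenseRange A)
    (horth : ∀ x y : H, (inner ℂ x y : ℂ) = 0 → (inner ℂ (A x) (A y) : ℂ) = 0)
    (x₀ : H) (hx₀ : ‖x₀‖ = 1) :
    ∀ c : ℂ, ∃ d : ℂ, A (c • x₀) = d • A x₀ := by
  have hcs : ∀ (r : ℝ) (z : K), r • z = (r : ℂ) • z := by
    intro r z
    rw [← smul_one_smul ℂ r z, Complex.real_smul, mul_one]
  have hcsH : ∀ (r : ℝ) (z : H), r • z = (r : ℂ) • z := by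
    intro r z
    rw [← smul_one_smul ℂ r z, Complex.real_smul, mul_one]
  set u := A x₀ with hu
  set v := A (Complex.I • x₀) with hv
  -- A of a complex multiple of x₀
  have key : ∀ α : ℂ, A (α • x₀) = α.re • u + α.im • v := by
    intro α
    have h1 : α • x₀ = (α.re : ℝ) • x₀ + (α.im : ℝ) • (Complex.I • x₀) := by
      rw [hcsH, hcsH, smul_smul, ← add_smul]
      norm_num [Complex.re_add_im]
    rw [h1, hadd, hreal, hreal]
  -- the span of u, v over ℂ
  set V : Submodule ℂ K := Submodule.span ℂ {u, v} with hV
  haveI : FiniteDimensional ℂ V := FiniteDimensional.span_of_finite ℂ (by simp)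
  have huV : u ∈ V := Submodule.subset_span (by simp)
  have hvV : v ∈ V := Submodule.subset_span (by simp)
  set P := V.orthogonalProjectionOnto with hP
  set M : Submodule ℝ K := Submodule.span ℝ {u, v} with hM
  haveI : FiniteDimensional ℝ M := FiniteDimensional.span_of_finite ℝ (by simp)
  have huM : u ∈ M := Submodule.subset_span (by simp)
  have hvM : v ∈ M := Submodule.subset_span (by simp)
  -- the projection of every A y lies in M
  have hproj : ∀ y : H, (P (A y) : K) ∈ M := by
    intro y
    set α : ℂ := inner ℂ x₀ y with hα
    set y' : H := y - α • x₀ with hy'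
    have hinner1 : (inner ℂ x₀ y' : ℂ) = 0 := by
      rw [hy', inner_sub_right, inner_smul_right, inner_self_eq_norm_sq_to_K, hx₀]
      simp [hα]
    have hinner2 : (inner ℂ (Complex.I • x₀) y' : ℂ) = 0 := by
      rw [inner_smul_left, hinner1, mul_zero]
    have hAy : A y = α.re • u + α.im • v + A y' := by
      have : y = α • x₀ + y' := by rw [hy']; abel
      rw [this, hadd, key]
    have hperp : A y' ∈ Vᗮ := by
      rw [hV]
      intro w hw
      induction hw using Submodule.span_induction with
      | mem w hw =>
        rcases hw with h | h
        · rw [h]; exact horth _ _ hinner1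
        · rw [h]; exact horth _ _ hinner2
      | zero => simp
      | add a b _ _ ha hb => rw [inner_add_left, ha, hb, add_zero]
      | smul c a _ ha => rw [inner_smul_left, ha, mul_zero]
    have h1 : (α.re : ℂ) • u + (α.im : ℂ) • v ∈ V := by
      exact V.add_mem (V.smul_mem _ huV) (V.smul_mem _ hvV)
    have : P (A y) = P ((α.re : ℝ) • u + (α.im : ℝ) • v) + P (A y') := by
      rw [← map_add, ← hAy]
    rw [this, Submodule.orthogonalProjectionOnto_apply_of_mem_orthogonal hperp,
      add_zero]
    have h2 : (P ((α.re : ℝ) • u + (α.im : ℝ) • v) : K) = (α.re : ℝ) • u + (α.im : ℝ) • v := by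
      change V.starProjection _ = _
      rw [Submodule.starProjection_eq_self_iff]
      rw [hcs, hcs]
      exact h1
    rw [h2]
    exact M.add_mem (M.smul_mem _ huM) (M.smul_mem _ hvM)
  -- every z in K projects into M
  have hall : ∀ z : K, (P z : K) ∈ M := by
    intro z
    have hclosed : IsClosed {z : K | (P z : K) ∈ M} := by
      have : {z : K | (P z : K) ∈ M} = (fun z : K => (P z : K)) ⁻¹' (M : Set K) := rfl
      rw [this]
      exact (M.closed_of_finiteDimensional).preimage
        (continuous_subtype_val.comp V.orthogonalProjectionOnto.continuous)
    have hsub : Set.range A ⊆ {z : K | (P z : K) ∈ M} := by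
      rintro _ ⟨y, rfl⟩; exact hproj y
    have := hclosed.closure_subset_iff.mpr hsub
    rw [hdense.closure_range] at this
    exact this (Set.mem_univ z)
  -- hence I • u ∈ M and I • v ∈ M
  have hIu : Complex.I • u ∈ M := by
    have h := hall (Complex.I • u)
    change V.starProjection _ ∈ M at h
    rwa [Submodule.starProjection_eq_self_iff.mpr (V.smul_mem _ huV)] at h
  have hIv : Complex.I • v ∈ M := by
    have h := hall (Complex.I • v)
    change V.starProjection _ ∈ M at h
    rwa [Submodule.starProjection_eq_self_iff.mpr (V.smul_mem _ hvV)] at h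
  -- extract: there exists e : ℂ with v = e • u
  have hexist : ∃ e : ℂ, v = e • u := by
    rw [hM] at hIu hIv
    obtain ⟨s, t, hst⟩ := Submodule.mem_span_pair.mp hIu
    by_cases ht : t = 0
    · -- then (s - I) • u = 0, so u = 0
      have hu0 : u = 0 := by
        rw [ht, zero_smul, add_zero, hcs] at hst
        have : ((s : ℂ) - Complex.I) • u = 0 := by rw [sub_smul, hst, sub_self]
        have hs : ((s : ℂ) - Complex.I) ≠ 0 := by
          intro h
          have := congrArg Complex.im h
          simp at this
        exact (smul_eq_zero.mp this).resolve_left hs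
      have hv0 : v = 0 := by
        obtain ⟨s', t', hst'⟩ := Submodule.mem_span_pair.mp hIv
        rw [hu0, smul_zero, zero_add, hcs] at hst'
        have : ((t' : ℂ) - Complex.I) • v = 0 := by rw [sub_smul, hst', sub_self]
        have hs : ((t' : ℂ) - Complex.I) ≠ 0 := by
          intro h
          have := congrArg Complex.im h
          simp at this
        exact (smul_eq_zero.mp this).resolve_left hs
      exact ⟨0, by rw [hv0, zero_smul]⟩
    · refine ⟨(Complex.I - s) / t, ?_⟩
      rw [hcs, hcs] at hst
      have h1 : (t : ℂ) • v = (Complex.I - s) • u := by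
        rw [sub_smul, ← hst]; module
      have h2 : v = ((t : ℂ)⁻¹ * (Complex.I - s)) • u := by
        rw [mul_smul, ← h1, smul_smul, inv_mul_cancel₀ (by exact_mod_cast ht), one_smul]
      rw [h2, div_eq_inv_mul]
  obtain ⟨e, he⟩ := hexist
  intro c
  refine ⟨(c.re : ℂ) + (c.im : ℂ) * e, ?_⟩
  rw [key c, he, hcs, hcs]
  module
end

section
/- Let H and K be complex inner product spaces and A : H → K a real-linear map with dense image preserving orthogonality. If x₀ ∈ H has norm one and A(x₀) = 0, then A(i x₀) = 0. -/
theorem stmt_1 {H K : Type*} [NormedAddCommGroup H] [InnerProductSpace ℂ H]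
    [NormedAddCommGroup K] [InnerProductSpace ℂ K]
    (A : H → K)
    (hadd : ∀ x y, A (x + y) = A x + A y)
    (hreal : ∀ (t : ℝ) (x : H), A (t • x) = t • A x)
    (hdense : DenseRange A)
    (horth : ∀ x y : H, (inner ℂ x y : ℂ) = 0 → (inner ℂ (A x) (A y) : ℂ) = 0)
    (x₀ : H) (hx₀ : ‖x₀‖ = 1) (hAx₀ : A x₀ = 0) :
    A (Complex.I • x₀) = 0 := by
  set v := A (Complex.I • x₀) with hv
  have key : ∀ y : H, ((inner ℂ v (A y) : ℂ)).im = 0 := by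
    intro y
    set c : ℂ := inner ℂ x₀ y with hc
    have hx : (inner ℂ x₀ x₀ : ℂ) = 1 := by
      simp [inner_self_eq_norm_sq_to_K, hx₀]
    have hz : (inner ℂ x₀ (y - c • x₀) : ℂ) = 0 := by
      simp [inner_sub_right, inner_smul_right, hx, hc, hx₀]
    have hzI : (inner ℂ (Complex.I • x₀) (y - c • x₀) : ℂ) = 0 := by
      rw [inner_smul_left, hz, mul_zero]
    have h1 : (inner ℂ v (A (y - c • x₀)) : ℂ) = 0 := horth _ _ hzI
    have hdecomp : y = (c.re : ℝ) • x₀ + ((c.im : ℝ) • (Complex.I • x₀) + (y - c • x₀)) := by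
      have h2 : (c.re : ℝ) • x₀ = (c.re : ℂ) • x₀ := by
        simp [Complex.coe_smul]
      have h3 : (c.im : ℝ) • (Complex.I • x₀) = (c.im : ℂ) • (Complex.I • x₀) := by
        simp [Complex.coe_smul]
      rw [h2, h3, smul_smul]
      rw [← add_assoc]
      have : (c.re : ℂ) • x₀ + ((c.im : ℂ) * Complex.I) • x₀ = c • x₀ := by
        rw [← add_smul]
        congr 1
        exact (Complex.re_add_im c).symm ▸ rfl
      rw [this]
      abel
    have hAy : A y = (c.re : ℝ) • A x₀ + ((c.im : ℝ) • v + A (y - c • x₀)) := by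
      conv_lhs => rw [hdecomp]
      rw [hadd, hadd, hreal, hreal]
    rw [hAy, hAx₀, smul_zero, zero_add, inner_add_right, h1, add_zero]
    have h4 : (c.im : ℝ) • v = (c.im : ℂ) • v := by simp [Complex.coe_smul]
    rw [h4, inner_smul_right]
    have h5 : (inner ℂ v v : ℂ).im = 0 := by rw [inner_self_eq_norm_sq_to_K]; norm_cast
    simp [Complex.mul_im, h5]
    exact Or.inr (by rw [← Complex.ofReal_pow, Complex.ofReal_im])
  have hclosed : IsClosed {k : K | (inner ℂ v k : ℂ).im = 0} := by
    have hcont : Continuous fun k : K => (inner ℂ v k : ℂ).im :=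
      Complex.continuous_im.comp (innerSL ℂ v).continuous
    exact isClosed_eq hcont continuous_const
  have hall : ∀ k : K, (inner ℂ v k : ℂ).im = 0 := by
    intro k
    have hsub : Set.range A ⊆ {k : K | (inner ℂ v k : ℂ).im = 0} := by
      rintro _ ⟨y, rfl⟩
      exact key y
    have := closure_minimal hsub hclosed
    have hk : k ∈ closure (Set.range A) := by
      rw [hdense.closure_range]; trivial
    exact this hk
  have h6 := hall (Complex.I • v)
  rw [inner_smul_right] at h6
  have h7 : (inner ℂ v v : ℂ).re = ‖v‖ ^ 2 := by
    simp [inner_self_eq_norm_sq_to_K]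
    norm_cast
  simp [Complex.mul_im, inner_self_im] at h6
  have : ‖v‖ ^ 2 = 0 := by rw [← h7]; simpa using h6
  have : ‖v‖ = 0 := by nlinarith [norm_nonneg v]
  exact norm_eq_zero.mp this
end

section
/- Let H, K be complex inner product spaces with dim H ≥ 2, and let A : H → K be a nonzero additive mapping with dense image that preserves orthogonality. Then A is real-linear. -/
theorem stmt_2 {H K : Type*} [NormedAddCommGroup H] [InnerProductSpace ℂ H]
    [NormedAddCommGroup K] [InnerProductSpace ℂ K]
    (hdim : 2 ≤ Module.rank ℂ H)
    (A : H → K) (hA : A ≠ 0)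
    (hadd : ∀ x y, A (x + y) = A x + A y)
    (hdense : DenseRange A)
    (horth : ∀ x y : H, (inner ℂ x y : ℂ) = 0 → (inner ℂ (A x) (A y) : ℂ) = 0) :
    ∀ (t : ℝ) (x : H), A (t • x) = t • A x := by
  have hzero : A 0 = 0 := by
    have h := hadd 0 0
    rw [add_zero] at h
    exact (add_eq_left.mp h.symm)
  have hneg : ∀ x, A (-x) = - A x := by
    intro x
    have h := hadd x (-x)
    rw [add_neg_cancel, hzero] at h
    exact (neg_eq_of_add_eq_zero_right h.symm).symm
  have hsub : ∀ x y, A (x - y) = A x - A y := by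
    intro x y
    rw [sub_eq_add_neg, hadd, hneg, sub_eq_add_neg]
  -- core lemma
  have P : ∀ u v : H, ‖u‖ = ‖v‖ → (starRingEnd ℂ) (inner ℂ u v : ℂ) = (inner ℂ u v : ℂ) →
      ‖A u‖ = ‖A v‖ := by
    intro u v hn hr
    have hvu : (inner ℂ v u : ℂ) = inner ℂ u v := by
      exact (inner_conj_symm v u).symm.trans hr
    have h1 : (inner ℂ (u + v) (u - v) : ℂ) = 0 := by
      rw [inner_sub_right, inner_add_left, inner_add_left, hvu,
        inner_self_eq_norm_sq_to_K, inner_self_eq_norm_sq_to_K, hn]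
      ring
    have h3 : (inner ℂ (A u + A v) (A u - A v) : ℂ) = 0 := by
      have h := horth (u + v) (u - v) h1
      rwa [hadd, hsub] at h
    have h0 : (inner ℂ (A u) (A v) : ℂ) = 0 → True := fun _ => trivial
    rw [inner_sub_right, inner_add_left, inner_add_left] at h3
    have h4 := congrArg (RCLike.re (K := ℂ)) h3
    simp only [map_sub, map_add, map_zero] at h4
    have e1 : RCLike.re (inner ℂ (A u) (A u) : ℂ) = ‖A u‖ ^ 2 := inner_self_eq_norm_sq (A u)
    have e2 : RCLike.re (inner ℂ (A v) (A v) : ℂ) = ‖A v‖ ^ 2 := inner_self_eq_norm_sq (A v)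
    have e3 : RCLike.re (inner ℂ (A v) (A u) : ℂ) = RCLike.re (inner ℂ (A u) (A v) : ℂ) :=
      inner_re_symm (A v) (A u)
    have h5 : ‖A u‖ ^ 2 = ‖A v‖ ^ 2 := by rw [← e1, ← e2]; linarith
    nlinarith [norm_nonneg (A u), norm_nonneg (A v), sq_nonneg (‖A u‖ - ‖A v‖)]
  -- existence of orthogonal partner of equal norm
  have hV : ∀ v : H, ∃ w : H, (inner ℂ v w : ℂ) = 0 ∧ ‖w‖ = ‖v‖ := by
    intro v
    by_cases hv : v = 0
    · exact ⟨0, by simp [hv]⟩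
    have hexists : ∃ w₀ : H, ∀ r : ℂ, r • v ≠ w₀ := by
      by_contra hc
      push_neg at hc
      have h1 : Module.rank ℂ H ≤ 1 := rank_le_one_iff.mpr ⟨v, fun w => hc w⟩
      have h2 : (2 : Cardinal) ≤ 1 := hdim.trans h1
      norm_num at h2
    obtain ⟨w₀, hw₀⟩ := hexists
    set w₁ : H := ((‖v‖ : ℂ) ^ 2) • w₀ - (inner ℂ v w₀ : ℂ) • v with hw₁def
    have hv2 : ((‖v‖ : ℂ) ^ 2) ≠ 0 :=
      pow_ne_zero 2 (Complex.ofReal_ne_zero.mpr (norm_ne_zero_iff.mpr hv))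
    have hvw₁ : (inner ℂ v w₁ : ℂ) = 0 := by
      rw [hw₁def, inner_sub_right, inner_smul_right, inner_smul_right,
        inner_self_eq_norm_sq_to_K, mul_comm]
      exact sub_self _
    have hw₁ne : w₁ ≠ 0 := by
      intro h
      apply hw₀ ((inner ℂ v w₀ : ℂ) / (‖v‖ : ℂ) ^ 2)
      have h2 : ((‖v‖ : ℂ) ^ 2) • w₀ = (inner ℂ v w₀ : ℂ) • v := by
        rw [hw₁def, sub_eq_zero] at h
        exact h
      rw [div_eq_mul_inv, mul_comm, mul_smul, ← h2, smul_smul,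
        inv_mul_cancel₀ hv2, one_smul]
    set w : H := ((‖v‖ / ‖w₁‖ : ℝ) : ℂ) • w₁ with hwdef
    refine ⟨w, ?_, ?_⟩
    · rw [hwdef, inner_smul_right, hvw₁, mul_zero]
    · rw [hwdef, norm_smul]
      have h0 : ‖w₁‖ ≠ 0 := norm_ne_zero_iff.mpr hw₁ne
      rw [Complex.norm_real, Real.norm_eq_abs, abs_of_nonneg (by positivity)]
      field_simp
  -- norm lemma
  have N : ∀ u v : H, ‖u‖ = ‖v‖ → ‖A u‖ = ‖A v‖ := by
    intro u v hn
    by_cases hv : v = 0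
    · have hu : u = 0 := by
        rw [← norm_eq_zero]; rw [hn, hv, norm_zero]
      rw [hu, hv]
    obtain ⟨w, hvw, hwn⟩ := hV v
    set z : ℂ := (inner ℂ u v : ℂ) with hz
    set lam : ℂ := if z = 0 then 1 else (starRingEnd ℂ) z / (‖z‖ : ℂ) with hlamdef
    have hlamabs : ‖lam‖ = 1 := by
      rw [hlamdef]
      by_cases h : z = 0
      · simp [h]
      · simp only [h, if_false, norm_div, Complex.norm_conj, Complex.norm_real, Real.norm_eq_abs,
          abs_of_nonneg (norm_nonneg z)]
        field_simp [norm_ne_zero_iff.mpr h]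
    have hlamnorm : ∀ x : H, ‖lam • x‖ = ‖x‖ := by
      intro x
      rw [norm_smul, hlamabs, one_mul]
    have h1 : ‖A u‖ = ‖A (lam • v)‖ := by
      apply P
      · rw [hlamnorm]; exact hn
      · rw [inner_smul_right]
        by_cases h : z = 0
        · rw [hlamdef, ← hz, h, mul_zero, map_zero]
        · have hzabs : (‖z‖ : ℂ) ≠ 0 :=
            Complex.ofReal_ne_zero.mpr (norm_ne_zero_iff.mpr h)
          have : lam * z = (‖z‖ : ℂ) := by
            rw [hlamdef, if_neg h, div_mul_eq_mul_div, Complex.conj_mul',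
              sq, mul_div_assoc, div_self hzabs, mul_one]
          rw [← hz, this, Complex.conj_ofReal]
    have h2 : ‖A (lam • v)‖ = ‖A w‖ := by
      apply P
      · rw [hlamnorm, hwn]
      · rw [inner_smul_left, hvw, mul_zero, map_zero]
    have h3 : ‖A v‖ = ‖A w‖ := by
      apply P
      · exact hwn.symm
      · rw [hvw, map_zero]
    rw [h1, h2, h3]
  -- a unit vector
  have hnt : ∃ v : H, v ≠ 0 := by
    by_contra hc
    push_neg at hc
    have h1 : Module.rank ℂ H ≤ 1 :=
      rank_le_one_iff.mpr ⟨0, fun w => ⟨0, by rw [hc w]; simp⟩⟩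
    have h2 : (2 : Cardinal) ≤ 1 := hdim.trans h1
    norm_num at h2
  obtain ⟨v₀, hv₀⟩ := hnt
  set x₀ : H := ((‖v₀‖⁻¹ : ℝ) : ℂ) • v₀ with hx₀def
  have hx₀ : ‖x₀‖ = 1 := by
    rw [hx₀def, norm_smul, Complex.norm_real, Real.norm_eq_abs,
      abs_of_nonneg (by positivity)]
    exact inv_mul_cancel₀ (norm_ne_zero_iff.mpr hv₀)
  obtain ⟨y₀, hxy₀, hy₀⟩ := hV x₀
  rw [hx₀] at hy₀
  -- the squared-norm transfer function
  set g : ℝ → ℝ := fun t => ‖A (((Real.sqrt t : ℝ) : ℂ) • x₀)‖ ^ 2 with hgdef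
  have hnormsmul : ∀ (r : ℝ) (x : H), 0 ≤ r → ‖((r : ℝ) : ℂ) • x‖ = r * ‖x‖ := by
    intro r x hr
    rw [norm_smul, Complex.norm_real, Real.norm_eq_abs, abs_of_nonneg hr]
  have habs : ∀ u : H, ‖A u‖ ^ 2 = g (‖u‖ ^ 2) := by
    intro u
    have h1 : ‖(((Real.sqrt (‖u‖ ^ 2)) : ℝ) : ℂ) • x₀‖ = ‖u‖ := by
      rw [hnormsmul _ _ (Real.sqrt_nonneg _), hx₀, mul_one,
        Real.sqrt_sq (norm_nonneg u)]
    rw [hgdef]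
    exact congrArg (· ^ 2) (N u _ h1.symm)
  have hgnn : ∀ t, 0 ≤ g t := fun t => sq_nonneg _
  have hgadd : ∀ s t : ℝ, 0 ≤ s → 0 ≤ t → g (s + t) = g s + g t := by
    intro s t hs ht
    set x : H := ((Real.sqrt s : ℝ) : ℂ) • x₀ with hxdef
    set y : H := ((Real.sqrt t : ℝ) : ℂ) • y₀ with hydef
    have hxy : (inner ℂ x y : ℂ) = 0 := by
      rw [hxdef, hydef, inner_smul_left, inner_smul_right, hxy₀]
      ring
    have hnx : ‖x‖ ^ 2 = s := by
      rw [hxdef, hnormsmul _ _ (Real.sqrt_nonneg _), hx₀, mul_one, Real.sq_sqrt hs]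
    have hny : ‖y‖ ^ 2 = t := by
      rw [hydef, hnormsmul _ _ (Real.sqrt_nonneg _), hy₀, mul_one, Real.sq_sqrt ht]
    have hno : ‖x + y‖ ^ 2 = s + t := by
      rw [@norm_add_sq ℂ _ _ _ _ x y, hxy, map_zero, mul_zero, add_zero, hnx, hny]
    have hAno : ‖A x + A y‖ ^ 2 = ‖A x‖ ^ 2 + ‖A y‖ ^ 2 := by
      rw [@norm_add_sq ℂ _ _ _ _ (A x) (A y), horth x y hxy, map_zero, mul_zero,
        add_zero]
    have h1 : g (s + t) = ‖A x‖ ^ 2 + ‖A y‖ ^ 2 := by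
      rw [← hno, ← habs (x + y), hadd, hAno]
    rw [h1, habs x, habs y, hnx, hny]
  have hgmono : ∀ a b : ℝ, 0 ≤ a → a ≤ b → g a ≤ g b := by
    intro a b ha hab
    have h1 : g b = g a + g (b - a) := by
      rw [← hgadd a (b - a) ha (by linarith)]
      ring_nf
    rw [h1]
    have := hgnn (b - a)
    linarith
  have hgnat : ∀ (n : ℕ) (t : ℝ), 0 ≤ t → g (n * t) = n * g t := by
    intro n
    induction n with
    | zero => intro t ht; simp [hgdef, hzero]
    | succ n ih =>
      intro t ht
      push_cast
      rw [add_mul, one_mul, hgadd (n * t) t (by positivity) ht, ih t ht, add_mul,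
        one_mul]
  -- A is continuous
  have hcont : Continuous A := by
    rw [Metric.continuous_iff]
    intro x ε hε
    obtain ⟨n, hn⟩ := exists_nat_gt (g 1 / ε ^ 2)
    set m : ℝ := (n : ℝ) + 1 with hmdef
    have hm : 0 < m := by positivity
    have hgm : g (1 / m) < ε ^ 2 := by
      have h1 : g 1 = m * g (1 / m) := by
        have := hgnat (n + 1) (1 / m) (by positivity)
        push_cast at this
        rw [← hmdef] at this
        rw [← this]
        congr 1
        field_simp
      have h2 : g 1 / ε ^ 2 < m := by
        rw [hmdef]
        have : (n : ℝ) ≤ n + 1 := by linarith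
        linarith
      have h3 : g 1 < m * ε ^ 2 := by
        have hε2 : (0:ℝ) < ε ^ 2 := by positivity
        calc g 1 = g 1 / ε ^ 2 * ε ^ 2 := by field_simp
        _ < m * ε ^ 2 := by exact mul_lt_mul_of_pos_right h2 hε2
      have := hgnn (1 / m)
      nlinarith
    refine ⟨Real.sqrt (1 / m), by positivity, ?_⟩
    intro y hy
    have hdist : dist (A y) (A x) = ‖A (y - x)‖ := by
      rw [dist_eq_norm, ← hsub]
    have hd2 : ‖y - x‖ ^ 2 < 1 / m := by
      have h1 : ‖y - x‖ < Real.sqrt (1 / m) := by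
        rw [← dist_eq_norm]; exact hy
      have h2 : Real.sqrt (1 / m) ^ 2 = 1 / m := Real.sq_sqrt (by positivity)
      nlinarith [norm_nonneg (y - x), Real.sqrt_nonneg (1 / m)]
    have h3 : ‖A (y - x)‖ ^ 2 < ε ^ 2 := by
      rw [habs (y - x)]
      calc g (‖y - x‖ ^ 2) ≤ g (1 / m) := hgmono _ _ (sq_nonneg _) (le_of_lt hd2)
      _ < ε ^ 2 := hgm
    rw [hdist]
    nlinarith [norm_nonneg (A (y - x))]
  -- conclusion
  intro t x
  exact map_real_smul (AddMonoidHom.mk' A hadd) hcont t x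
end

section
/- Let H, K be complex inner product spaces with dim H ≥ 2, and let A : H → K be a nonzero additive mapping with dense image preserving orthogonality. Then A(x) ≠ 0 for every nonzero x ∈ H. -/
theorem stmt_3 {H K : Type*} [NormedAddCommGroup H] [InnerProductSpace ℂ H]
    [NormedAddCommGroup K] [InnerProductSpace ℂ K]
    (hdim : 2 ≤ Module.rank ℂ H)
    (A : H → K) (hA : A ≠ 0)
    (hadd : ∀ x y, A (x + y) = A x + A y)
    (hdense : DenseRange A)
    (horth : ∀ x y : H, (inner ℂ x y : ℂ) = 0 → (inner ℂ (A x) (A y) : ℂ) = 0) :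
    ∀ x : H, x ≠ 0 → A x ≠ 0 := by
  intro x hx hAx
  have h0 : A 0 = 0 := by
    have := hadd 0 0
    simp only [add_zero] at this
    exact (left_eq_add.mp this)
  have hneg : ∀ y, A (-y) = -A y := by
    intro y
    have h := hadd (-y) y
    simp only [neg_add_cancel, h0] at h
    exact eq_neg_of_add_eq_zero_left h.symm
  have hsub : ∀ y z, A (y - z) = A y - A z := by
    intro y z
    rw [sub_eq_add_neg, hadd, hneg, sub_eq_add_neg]
  have hxn : (‖x‖ : ℂ) ≠ 0 := by
    simp [norm_eq_zero, hx]
  -- find e ⟂ x, e ≠ 0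
  obtain ⟨w₁, hw₁⟩ : ∃ w : H, w ∉ Submodule.span ℂ {x} := by
    by_contra h
    push_neg at h
    have htop : (Submodule.span ℂ {x} : Submodule ℂ H) = ⊤ :=
      Submodule.eq_top_iff'.mpr h
    have h1 : Module.rank ℂ H ≤ 1 := by
      have h2 := rank_span_le (R := ℂ) (M := H) ({x} : Set H)
      rw [htop, rank_top] at h2
      simpa using h2
    have : (2 : Cardinal) ≤ 1 := hdim.trans h1
    norm_num at this
  set c₁ : ℂ := inner ℂ x w₁ / (‖x‖ : ℂ) ^ 2 with hc₁
  set e : H := w₁ - c₁ • x with he_def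
  have hxe : (inner ℂ x e : ℂ) = 0 := by
    rw [he_def, inner_sub_right, inner_smul_right, inner_self_eq_norm_sq_to_K, hc₁]
    field_simp
    simp
  have hex : (inner ℂ e x : ℂ) = 0 := by
    rw [← inner_conj_symm, hxe, map_zero]
  have he : e ≠ 0 := by
    intro h
    apply hw₁
    have : w₁ = c₁ • x := by
      have := sub_eq_zero.mp h
      simpa [he_def] using this
    exact this ▸ Submodule.mem_span_singleton.mpr ⟨c₁, rfl⟩
  have hen : (‖e‖ : ℂ) ≠ 0 := by simp [norm_eq_zero, he]
  -- kernel is ℂ-homogeneous in direction x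
  have hker : ∀ t : ℂ, A (t • x) = 0 := by
    intro t
    obtain ⟨t2, ht2⟩ : ∃ t2 : ℂ, t2 = (starRingEnd ℂ) t * t := ⟨_, rfl⟩
    have hee : (inner ℂ e e : ℂ) ≠ 0 := fun h => he (inner_self_eq_zero.mp h)
    obtain ⟨s', hse⟩ : ∃ s' : ℂ, s' * (inner ℂ e e : ℂ) = -(t2 * (inner ℂ x x : ℂ)) :=
      ⟨-(t2 * (inner ℂ x x : ℂ) / (inner ℂ e e : ℂ)), by field_simp⟩
    have haA : (inner ℂ (A e) (A (s' • e)) : ℂ) = 0 := by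
      have horth1 : (inner ℂ (x + e) (t2 • x + s' • e) : ℂ) = 0 := by
        simp only [inner_add_left, inner_add_right, inner_smul_left, inner_smul_right,
          hxe, hex, mul_zero, zero_mul, add_zero, zero_add]
        linear_combination hse
      have h2 := horth _ _ horth1
      rw [hadd, hadd, inner_add_left, inner_add_right, inner_add_right, hAx] at h2
      have h3 : (inner ℂ (A e) (A (t2 • x)) : ℂ) = 0 :=
        horth _ _ (by rw [inner_smul_right, hex, mul_zero])
      simpa [h3] using h2
    have horth2 : (inner ℂ (t • x + e) (t • x + s' • e) : ℂ) = 0 := by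
      simp only [inner_add_left, inner_add_right, inner_smul_left, inner_smul_right,
        hxe, hex, mul_zero, zero_mul, add_zero, zero_add]
      linear_combination hse - (inner ℂ x x : ℂ) * ht2
    have h4 := horth _ _ horth2
    rw [hadd, hadd, inner_add_left, inner_add_right, inner_add_right] at h4
    have h5 : (inner ℂ (A (t • x)) (A (s' • e)) : ℂ) = 0 :=
      horth _ _ (by rw [inner_smul_left, inner_smul_right, hxe, mul_zero, mul_zero])
    have h6 : (inner ℂ (A e) (A (t • x)) : ℂ) = 0 :=
      horth _ _ (by rw [inner_smul_right, hex, mul_zero])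
    rw [h5, h6, haA] at h4
    simp only [add_zero, zero_add] at h4
    exact inner_self_eq_zero.mp h4
  -- every z ⟂ x is killed
  have hperp : ∀ z : H, (inner ℂ x z : ℂ) = 0 → A z = 0 := by
    intro z hz
    set u : H := ((‖z‖ / ‖x‖ : ℝ) : ℂ) • x with hu_def
    have hAu : A u = 0 := hker _
    have hzx : (inner ℂ z x : ℂ) = 0 := by rw [← inner_conj_symm, hz, map_zero]
    have horth3 : (inner ℂ (z + u) (z - u) : ℂ) = 0 := by
      have hxr : (‖x‖ : ℝ) ≠ 0 := by simpa [norm_eq_zero] using hx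
      simp only [hu_def, inner_add_left, inner_sub_right, inner_smul_left, inner_smul_right,
        hzx, hz, inner_self_eq_norm_sq_to_K, Complex.conj_ofReal, mul_zero, zero_mul,
        add_zero, zero_add, sub_zero, zero_sub]
      push_cast
      field_simp
      simp
    have h7 := horth _ _ horth3
    rw [hadd, hsub, hAu, add_zero, sub_zero] at h7
    exact inner_self_eq_zero.mp h7
  -- conclude A = 0
  apply hA
  funext w
  show A w = 0
  set c : ℂ := inner ℂ x w / (‖x‖ : ℂ) ^ 2 with hc
  have hz : (inner ℂ x (w - c • x) : ℂ) = 0 := by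
    rw [inner_sub_right, inner_smul_right, inner_self_eq_norm_sq_to_K, hc]
    field_simp
    simp
  have h8 : A (w - c • x) = 0 := hperp _ hz
  have h9 : A w = A (w - c • x) + A (c • x) := by
    rw [← hadd]; congr 1; abel
  rw [h9, h8, hker, add_zero]
end

section
/- Let H, K be complex inner product spaces with dim H ≥ 2 and let A : H → K be a nonzero additive mapping with dense image preserving orthogonality. Then there exists γ > 0 such that ‖A(x)‖ = γ‖x‖ for all x ∈ H. -/
open Complex

set_option maxHeartbeats 1000000
set_option linter.unusedSectionVars false


private lemma stmt4_lin (g : ℝ →+ ℝ) (hm : Monotone g) (t : ℝ) : g t = t * g 1 := by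
  have hq : ∀ q : ℚ, g (q : ℝ) = (q : ℝ) * g 1 := by
    intro q
    have h := map_ratCast_smul g ℝ ℝ q (1 : ℝ)
    simpa [smul_eq_mul] using h
  have hg1 : 0 ≤ g 1 := by
    have := hm (zero_le_one (α := ℝ))
    simpa using this
  rcases eq_or_lt_of_le hg1 with h0 | h0
  · -- g 1 = 0, hence g vanishes on rationals, hence everywhere by monotonicity
    obtain ⟨q, hq'⟩ := exists_rat_lt t
    obtain ⟨q', hq''⟩ := exists_rat_gt t
    have h1 : g q ≤ g t := hm hq'.le
    have h2 : g t ≤ g q' := hm hq''.le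
    rw [hq] at h1; rw [hq] at h2
    rw [← h0] at h1 h2 ⊢
    simp only [mul_zero] at h1 h2 ⊢
    linarith
  · apply le_antisymm
    · by_contra hlt
      push_neg at hlt
      have ht : t < g t / g 1 := by rw [lt_div_iff₀ h0]; linarith
      obtain ⟨q, hq1, hq2⟩ := exists_rat_btwn ht
      have h1 : g t ≤ (q : ℝ) * g 1 := by rw [← hq q]; exact hm hq1.le
      have h2 : (q : ℝ) * g 1 < g t := (lt_div_iff₀ h0).mp hq2
      linarith
    · by_contra hlt
      push_neg at hlt
      have ht : g t / g 1 < t := by rw [div_lt_iff₀ h0]; linarith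
      obtain ⟨q, hq1, hq2⟩ := exists_rat_btwn ht
      have h1 : (q : ℝ) * g 1 ≤ g t := by rw [← hq q]; exact hm hq2.le
      have h2 : g t < (q:ℝ) * g 1 := by
        rw [div_lt_iff₀ h0] at hq1; linarith
      linarith

private lemma stmt4_quad (h : ℂ → ℝ) (hnn : ∀ a, 0 ≤ h a)
    (hdouble : ∀ a, h (2 * a) = 4 * h a)
    (hkey : ∀ p q r s : ℂ, (starRingEnd ℂ) p * q + r * (starRingEnd ℂ) s = 0 →
      h (p + q) + h (r + s) = h p + h q + h r + h s) :
    ∀ a : ℂ, h a = Complex.normSq a * h 1 := by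
  set c := starRingEnd ℂ with hc
  have h0 : h 0 = 0 := by have := hdouble 0; rw [mul_zero] at this; linarith
  -- G is the "polarization" defect
  set G : ℂ → ℝ := fun t => h (1 + t) - h 1 - h t with hG
  have hGwd : ∀ p q : ℂ, h (p + q) = h p + h q + G (c p * q) := by
    intro p q
    have e1 : h (p + q) + h (-(c p * q) + 1) = h p + h q + h (-(c p * q)) + h 1 := by
      apply hkey
      simp
    have e2 : h (1 + c p * q) + h (-(c p * q) + 1) =
        h 1 + h (c p * q) + h (-(c p * q)) + h 1 := by
      apply hkey
      simp
    simp only [hG]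
    linarith
  have hGodd : ∀ t : ℂ, G (-t) = - G t := by
    intro t
    have e1 : h (1 + t) + h (-t + 1) = h 1 + h t + h (-t) + h 1 := by
      apply hkey; simp
    have e2 : h (1 + t) = h 1 + h t + G (t) := by
      have := hGwd 1 t; simpa using this
    have e3 : h (-t + 1) = h (-t) + h 1 + G (c (-t) * 1) := hGwd (-t) 1
    have e4 : h (1 + (-t)) = h 1 + h (-t) + G (-t) := by
      have := hGwd 1 (-t); simpa using this
    -- relate e3's G argument to -c t ; but we want statement about G(-t) vs G t.
    have e5 : h (-t + 1) = h (1 + -t) := by rw [add_comm]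
    rw [e5, e4] at e1
    linarith
  have hneg : ∀ a : ℂ, h (-a) = h a := by
    intro a
    have e1 : h (a + (-a)) = h a + h (-a) + G (c a * (-a)) := hGwd a (-a)
    have e2 : h (a + a) = h a + h a + G (c a * a) := hGwd a a
    have e3 : G (c a * -a) = - G (c a * a) := by
      rw [mul_neg]; exact hGodd _
    have e4 : h (a + a) = 4 * h a := by
      rw [show a + a = 2 * a by ring]; exact hdouble a
    have e5 : h (a + -a) = 0 := by simpa using h0
    rw [e5] at e1
    -- e2: 4 h a = 2 h a + G(c a * a)  ⇒ G(c a * a) = 2 h a ⇒ h(-a) = 2 h a - h a = h a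
    rw [e3] at e1
    linarith
  have hpar : ∀ a b : ℂ, h (a + b) + h (a - b) = 2 * h a + 2 * h b := by
    intro a b
    have e1 := hGwd a b
    have e2 := hGwd a (-b)
    rw [show a + -b = a - b by ring] at e2
    rw [hneg b] at e2
    rw [mul_neg, hGodd] at e2
    linarith
  have hdiff : ∀ x y : ℂ, h (x + y) - h (x - y) = 2 * G (c x * y) := by
    intro x y
    have e1 := hGwd x y
    have e2 := hGwd x (-y)
    rw [show x + -y = x - y by ring, hneg y, mul_neg, hGodd] at e2
    linarith
  have hGmid : ∀ b d : ℂ, G (b + d) + G (b - d) = 2 * G b := by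
    intro b d
    have e1 := hpar (1 + b) d
    have e2 := hpar (1 - b) d
    have f1 : h (1 + b + d) = h (1 + (b + d)) := by ring_nf
    have f2 : h (1 + b - d) = h (1 + (b - d)) := by ring_nf
    have f3 : h (1 - b + d) = h (1 - (b - d)) := by ring_nf
    have f4 : h (1 - b - d) = h (1 - (b + d)) := by ring_nf
    rw [f1, f2] at e1
    rw [f3, f4] at e2
    have g1 : h (1 + (b + d)) - h (1 - (b + d)) = 2 * G (b + d) := by
      have := hdiff 1 (b + d); simpa using this
    have g2 : h (1 + (b - d)) - h (1 - (b - d)) = 2 * G (b - d) := by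
      have := hdiff 1 (b - d); simpa using this
    have g3 : h (1 + b) - h (1 - b) = 2 * G b := by
      have := hdiff 1 b; simpa using this
    linarith
  have hGdouble : ∀ b : ℂ, G (2 * b) = 2 * G b := by
    intro b
    have := hGmid b b
    have hg0 : G 0 = 0 := by simp [hG, h0]
    rw [show b + b = 2 * b by ring, show b - b = 0 by ring, hg0] at this
    linarith
  have hGadd : ∀ x y : ℂ, G (x + y) = G x + G y := by
    intro x y
    have := hGmid ((x + y) / 2) ((x - y) / 2)
    rw [show (x + y) / 2 + (x - y) / 2 = x by ring,
      show (x + y) / 2 - (x - y) / 2 = y by ring] at this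
    have h2 := hGdouble ((x + y) / 2)
    rw [show 2 * ((x + y) / 2) = x + y by ring] at h2
    linear_combination h2 - this
  have hval : ∀ a : ℂ, 2 * h a = G (c a * a) := by
    intro a
    have e2 : h (a + a) = h a + h a + G (c a * a) := hGwd a a
    rw [show a + a = 2 * a by ring, hdouble] at e2
    linarith
  have hGnn : ∀ t : ℝ, 0 ≤ t → 0 ≤ G (t : ℂ) := by
    intro t ht
    have hs : c (Real.sqrt t : ℂ) * (Real.sqrt t : ℂ) = (t : ℂ) := by
      rw [Complex.conj_ofReal, ← Complex.ofReal_mul, Real.mul_self_sqrt ht]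
    have := hval (Real.sqrt t : ℂ)
    rw [hs] at this
    linarith [hnn (Real.sqrt t : ℂ)]
  -- linearity of G on ℝ
  set g : ℝ →+ ℝ := AddMonoidHom.mk' (fun t => G (t : ℂ)) (by
    intro a b
    push_cast
    exact hGadd a b) with hgdef
  have hmono : Monotone g := by
    intro a b hab
    have : g b = g a + g (b - a) := by
      rw [← map_add]; norm_num
    rw [this]
    have := hGnn (b - a) (by linarith)
    have hgba : g (b - a) = G ((b - a : ℝ) : ℂ) := rfl
    linarith [hgba ▸ this]
  have hglin : ∀ t : ℝ, G (t : ℂ) = t * G 1 := by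
    intro t
    have := stmt4_lin g hmono t
    simpa [hgdef, AddMonoidHom.mk'_apply] using this
  -- conclude
  intro a
  have e1 := hval a
  rw [show c a * a = ((Complex.normSq a : ℝ) : ℂ) by
    rw [Complex.normSq_eq_conj_mul_self]] at e1
  rw [hglin] at e1
  have e2 := hval 1
  have : c 1 * 1 = ((1 : ℝ) : ℂ) := by simp
  rw [this] at e2
  have hg1 : G ((1:ℝ):ℂ) = 2 * h 1 := by linarith
  have hg1' : G (1 : ℂ) = 2 * h 1 := by
    have : ((1:ℝ):ℂ) = (1:ℂ) := by norm_num
    rw [← this]; exact hg1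
  rw [hg1'] at e1
  linarith


section geo

variable {H K : Type*} [NormedAddCommGroup H] [InnerProductSpace ℂ H]
  [NormedAddCommGroup K] [InnerProductSpace ℂ K]

private lemma stmt4_A0 (A : H → K) (hadd : ∀ x y, A (x + y) = A x + A y) : A 0 = 0 := by
  have h := hadd 0 0
  rw [add_zero] at h
  exact (left_eq_add.mp h)

private lemma stmt4_Aneg (A : H → K) (hadd : ∀ x y, A (x + y) = A x + A y) (x : H) :
    A (-x) = - A x := by
  have h := hadd x (-x)
  rw [add_neg_cancel, stmt4_A0 A hadd] at h
  exact eq_neg_of_add_eq_zero_right h.symm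

private lemma stmt4_Asub (A : H → K) (hadd : ∀ x y, A (x + y) = A x + A y) (x y : H) :
    A (x - y) = A x - A y := by
  have h1 := hadd y (x - y)
  rw [show y + (x - y) = x by abel] at h1
  exact eq_sub_of_add_eq' h1.symm

private lemma stmt4_pyth (A : H → K) (hadd : ∀ x y, A (x + y) = A x + A y)
    (horth : ∀ x y : H, (inner ℂ x y : ℂ) = 0 → (inner ℂ (A x) (A y) : ℂ) = 0)
    (x y : H) (h : (inner ℂ x y : ℂ) = 0) : ‖A (x + y)‖ ^ 2 = ‖A x‖ ^ 2 + ‖A y‖ ^ 2 := by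
  have h2 := horth x y h
  rw [hadd, norm_add_sq (𝕜 := ℂ), h2]
  simp

private lemma stmt4_sqeq {α β : ℝ} (ha : 0 ≤ α) (hb : 0 ≤ β) (h : α ^ 2 = β ^ 2) : α = β := by
  rw [← Real.sqrt_sq ha, ← Real.sqrt_sq hb, h]

private lemma stmt4_eqnorm (A : H → K) (hadd : ∀ x y, A (x + y) = A x + A y)
    (horth : ∀ x y : H, (inner ℂ x y : ℂ) = 0 → (inner ℂ (A x) (A y) : ℂ) = 0)
    (x y : H) (h : (inner ℂ x y : ℂ) = 0) (hn : ‖x‖ = ‖y‖) : ‖A x‖ = ‖A y‖ := by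
  have hyx : (inner ℂ y x : ℂ) = 0 := by rw [← inner_conj_symm y x, h, map_zero]
  have ho : (inner ℂ (x + y) (x - y) : ℂ) = 0 := by
    rw [inner_add_left, inner_sub_right, inner_sub_right, h, hyx,
      inner_self_eq_norm_sq_to_K, inner_self_eq_norm_sq_to_K, hn]
    ring
  have hA := horth _ _ ho
  have hx := horth x y h
  have hyx' := horth y x hyx
  rw [hadd, stmt4_Asub A hadd] at hA
  rw [inner_add_left, inner_sub_right, inner_sub_right, hx, hyx',
    inner_self_eq_norm_sq_to_K, inner_self_eq_norm_sq_to_K] at hA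
  have hr2 : ‖A x‖ ^ 2 = ‖A y‖ ^ 2 := by
    apply RCLike.ofReal_inj (K := ℂ) |>.mp
    push_cast
    linear_combination hA
  exact stmt4_sqeq (norm_nonneg _) (norm_nonneg _) hr2

private lemma stmt4_orth (hdim : 2 ≤ Module.rank ℂ H) (e : H) (he : e ≠ 0) :
    ∃ f : H, (inner ℂ e f : ℂ) = 0 ∧ ‖f‖ = 1 := by
  have hv : ∃ v : H, v ∉ Submodule.span ℂ ({e} : Set H) := by
    by_contra hv
    push_neg at hv
    have htop : (Submodule.span ℂ ({e} : Set H)) = ⊤ := by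
      rw [eq_top_iff]; exact fun v _ => hv v
    have h1 : Module.rank ℂ H ≤ 1 := by
      rw [← rank_top ℂ H, ← htop]
      simpa using rank_span_le (R := ℂ) ({e} : Set H)
    have := le_trans hdim h1
    norm_num at this
  obtain ⟨v, hv⟩ := hv
  have hne : (‖e‖ : ℂ) ≠ 0 := by
    simpa using norm_ne_zero_iff.mpr he
  set w := v - ((inner ℂ e v : ℂ) / ((‖e‖ : ℂ)) ^ 2) • e with hwdef
  have hew : (inner ℂ e w : ℂ) = 0 := by
    rw [hwdef, inner_sub_right, inner_smul_right, inner_self_eq_norm_sq_to_K]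
    field_simp
    rw [mul_zero]; exact mul_eq_zero_of_right _ (sub_self (_ : ℂ))
  have hw0 : w ≠ 0 := by
    intro h0
    apply hv
    rw [Submodule.mem_span_singleton]
    refine ⟨(inner ℂ e v : ℂ) / ((‖e‖ : ℂ)) ^ 2, ?_⟩
    rw [hwdef, sub_eq_zero] at h0
    exact h0.symm
  have hwn : ‖w‖ ≠ 0 := norm_ne_zero_iff.mpr hw0
  refine ⟨(‖w‖ : ℂ)⁻¹ • w, by rw [inner_smul_right, hew, mul_zero], ?_⟩
  rw [norm_smul, norm_inv]
  simp only [Complex.norm_real, norm_norm]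
  field_simp

end geo
section main

variable {H K : Type*} [NormedAddCommGroup H] [InnerProductSpace ℂ H]
  [NormedAddCommGroup K] [InnerProductSpace ℂ K]

private lemma stmt4_scale (A : H → K) (hadd : ∀ x y, A (x + y) = A x + A y)
    (horth : ∀ x y : H, (inner ℂ x y : ℂ) = 0 → (inner ℂ (A x) (A y) : ℂ) = 0)
    (e f : H) (he1 : ‖e‖ = 1) (hf1 : ‖f‖ = 1) (hef : (inner ℂ e f : ℂ) = 0) :
    ∀ a : ℂ, ‖A (a • e)‖ = ‖a‖ * ‖A e‖ := by
  have hfe : (inner ℂ f e : ℂ) = 0 := by rw [← inner_conj_symm f e, hef, map_zero]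
  set h : ℂ → ℝ := fun a => ‖A (a • e)‖ ^ 2 with hh
  have hsmul_orth : ∀ a b : ℂ, (inner ℂ (a • e) (b • f) : ℂ) = 0 := by
    intro a b; rw [inner_smul_left, inner_smul_right, hef]; ring
  have hAef : ‖A e‖ = ‖A f‖ := stmt4_eqnorm A hadd horth e f hef (by rw [he1, hf1])
  have hnormdec : ∀ a b : ℂ, ‖a • e + b • f‖ ^ 2 = ‖a‖ ^ 2 + ‖b‖ ^ 2 := by
    intro a b
    rw [norm_add_sq (𝕜 := ℂ), hsmul_orth]
    simp [norm_smul, he1, hf1]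
  have hdec0 : ∀ a b : ℂ, ‖A (a • e + b • f)‖ ^ 2 = ‖A (a • e)‖ ^ 2 + ‖A (b • f)‖ ^ 2 :=
    fun a b => stmt4_pyth A hadd horth _ _ (hsmul_orth a b)
  have hpsi : ∀ a : ℂ, ‖A ((starRingEnd ℂ a) • f)‖ ^ 2 = h a := by
    intro a
    have horthuv : (inner ℂ (a • e + f) (e - (starRingEnd ℂ a) • f) : ℂ) = 0 := by
      simp only [inner_add_left, inner_sub_right, inner_smul_left, inner_smul_right, hef, hfe,
        inner_self_eq_norm_sq_to_K, he1, hf1, RCLike.ofReal_one, one_pow, mul_zero, mul_one,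
        add_zero, zero_add, zero_sub, sub_zero]
      ring
    have hnuv : ‖a • e + f‖ = ‖e - starRingEnd ℂ a • f‖ := by
      apply stmt4_sqeq (norm_nonneg _) (norm_nonneg _)
      have h1 : a • e + f = a • e + (1 : ℂ) • f := by rw [one_smul]
      have h2 : e - starRingEnd ℂ a • f = (1 : ℂ) • e + (-(starRingEnd ℂ a)) • f := by
        rw [one_smul, neg_smul, ← sub_eq_add_neg]
      rw [h1, h2, hnormdec, hnormdec]
      simp [RCLike.norm_conj]
      ring
    have hEq := stmt4_eqnorm A hadd horth _ _ horthuv hnuv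
    have hL : ‖A (a • e + f)‖ ^ 2 = h a + ‖A f‖ ^ 2 := by
      have := hdec0 a 1; rw [one_smul] at this; exact this
    have hR : ‖A (e - starRingEnd ℂ a • f)‖ ^ 2 = ‖A e‖ ^ 2 + ‖A (starRingEnd ℂ a • f)‖ ^ 2 := by
      have h2 : e - starRingEnd ℂ a • f = (1 : ℂ) • e + (-(starRingEnd ℂ a)) • f := by
        rw [one_smul, neg_smul, ← sub_eq_add_neg]
      rw [h2, hdec0, one_smul, neg_smul, ← smul_neg]
      rw [show ((starRingEnd ℂ) a • (-f)) = -((starRingEnd ℂ) a • f) by rw [smul_neg]]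
      rw [stmt4_Aneg A hadd, norm_neg]
    have hsq : ‖A (a • e + f)‖ ^ 2 = ‖A (e - starRingEnd ℂ a • f)‖ ^ 2 := by rw [hEq]
    have hAef2 : ‖A e‖ ^ 2 = ‖A f‖ ^ 2 := by rw [hAef]
    rw [hL, hR] at hsq
    linarith
  have hdec : ∀ a b : ℂ, ‖A (a • e + b • f)‖ ^ 2 = h a + h (starRingEnd ℂ b) := by
    intro a b
    rw [hdec0]
    have hb : ‖A (b • f)‖ ^ 2 = h (starRingEnd ℂ b) := by
      have := hpsi (starRingEnd ℂ b)
      rwa [Complex.conj_conj] at this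
    rw [hb]
  have hkey : ∀ p q r s : ℂ, (starRingEnd ℂ) p * q + r * (starRingEnd ℂ) s = 0 →
      h (p + q) + h (r + s) = h p + h q + h r + h s := by
    intro p q r s hc
    have hperp : (inner ℂ (p • e + (starRingEnd ℂ r) • f) (q • e + (starRingEnd ℂ s) • f) : ℂ) = 0 := by
      simp only [inner_add_left, inner_add_right, inner_smul_left, inner_smul_right, hef, hfe,
        inner_self_eq_norm_sq_to_K, he1, hf1, RCLike.ofReal_one, one_pow, mul_zero, mul_one,
        add_zero, zero_add, Complex.conj_conj]
      linear_combination hc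
    have hp := stmt4_pyth A hadd horth _ _ hperp
    have hsum : (p • e + (starRingEnd ℂ) r • f) + (q • e + (starRingEnd ℂ) s • f)
        = (p + q) • e + ((starRingEnd ℂ) r + (starRingEnd ℂ) s) • f := by
      rw [add_smul, add_smul]; abel
    rw [hsum] at hp
    have d1 := hdec (p + q) ((starRingEnd ℂ) r + (starRingEnd ℂ) s)
    have d2 := hdec p ((starRingEnd ℂ) r)
    have d3 := hdec q ((starRingEnd ℂ) s)
    simp only [map_add, Complex.conj_conj] at d1 d2 d3
    rw [d1, d2, d3] at hp
    linarith
  have hnn : ∀ a : ℂ, 0 ≤ h a := fun a => sq_nonneg _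
  have hdouble : ∀ a : ℂ, h (2 * a) = 4 * h a := by
    intro a
    have h2 : (2 * a) • e = a • e + a • e := by rw [two_mul, add_smul]
    simp only [hh]
    rw [h2, hadd]
    rw [show A (a • e) + A (a • e) = (2 : ℝ) • A (a • e) by rw [two_smul]]
    rw [norm_smul]
    norm_num
    ring
  have hq := stmt4_quad h hnn hdouble hkey
  intro a
  have hqa := hq a
  simp only [hh] at hqa
  rw [one_smul] at hqa
  apply stmt4_sqeq (norm_nonneg _) (by positivity)
  rw [hqa, mul_pow, Complex.sq_norm]

private lemma stmt4_unit (hdim : 2 ≤ Module.rank ℂ H) (A : H → K)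
    (hadd : ∀ x y, A (x + y) = A x + A y)
    (horth : ∀ x y : H, (inner ℂ x y : ℂ) = 0 → (inner ℂ (A x) (A y) : ℂ) = 0)
    (u v : H) (hu : ‖u‖ = 1) (hv : ‖v‖ = 1) : ‖A u‖ = ‖A v‖ := by
  have hu0 : u ≠ 0 := by intro h0; rw [h0] at hu; simp at hu
  obtain ⟨g, hug, hg1⟩ := stmt4_orth hdim u hu0
  by_cases hcol : ∃ c : ℂ, v = c • u
  · obtain ⟨c, rfl⟩ := hcol
    have hc : ‖c‖ = 1 := by rw [norm_smul, hu, mul_one] at hv; exact hv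
    rw [stmt4_scale A hadd horth u g hu hg1 hug c, hc, one_mul]
  · push_neg at hcol
    set w := v - (inner ℂ u v : ℂ) • u with hwdef
    have hw0 : w ≠ 0 := by
      intro h0
      rw [hwdef, sub_eq_zero] at h0
      exact hcol _ h0
    have huw : (inner ℂ u w : ℂ) = 0 := by
      rw [hwdef, inner_sub_right, inner_smul_right, inner_self_eq_norm_sq_to_K, hu]
      simp
    have hwn : ‖w‖ ≠ 0 := norm_ne_zero_iff.mpr hw0
    have hwnC : (‖w‖ : ℂ) ≠ 0 := by simpa using hwn
    set f := ((‖w‖ : ℂ))⁻¹ • w with hfdef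
    have huf : (inner ℂ u f : ℂ) = 0 := by rw [hfdef, inner_smul_right, huw, mul_zero]
    have hf1 : ‖f‖ = 1 := by
      rw [hfdef, norm_smul, norm_inv]
      simp only [Complex.norm_real, norm_norm]
      field_simp
    have hfu : (inner ℂ f u : ℂ) = 0 := by rw [← inner_conj_symm f u, huf, map_zero]
    have hvdecomp : v = (inner ℂ u v : ℂ) • u + (‖w‖ : ℂ) • f := by
      rw [hfdef, smul_smul, mul_inv_cancel₀ hwnC, one_smul, hwdef]
      abel
    have hperp : (inner ℂ ((inner ℂ u v : ℂ) • u) ((‖w‖ : ℂ) • f) : ℂ) = 0 := by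
      rw [inner_smul_left, inner_smul_right, huf]; ring
    have hdecv := stmt4_pyth A hadd horth ((inner ℂ u v : ℂ) • u) ((‖w‖ : ℂ) • f) hperp
    have hnv : ‖(inner ℂ u v : ℂ)‖ ^ 2 + ‖w‖ ^ 2 = 1 := by
      have hnv1 : ‖v‖ ^ 2 = ‖(inner ℂ u v : ℂ) • u + (‖w‖ : ℂ) • f‖ ^ 2 := by rw [← hvdecomp]
      rw [norm_add_sq (𝕜 := ℂ), hperp] at hnv1
      simp only [norm_smul, hu, hf1, mul_one, Complex.norm_real, norm_norm, map_zero,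
        mul_zero, add_zero, zero_add] at hnv1
      rw [hv] at hnv1
      simpa using hnv1.symm
    have h1 : ‖A v‖ ^ 2 = ‖A ((inner ℂ u v : ℂ) • u)‖ ^ 2 + ‖A ((‖w‖ : ℂ) • f)‖ ^ 2 := by
      conv_lhs => rw [hvdecomp]
      exact hdecv
    rw [stmt4_scale A hadd horth u g hu hg1 hug, stmt4_scale A hadd horth f u hf1 hu hfu] at h1
    have hAf : ‖A f‖ = ‖A u‖ := (stmt4_eqnorm A hadd horth u f huf (by rw [hu, hf1])).symm
    rw [hAf] at h1
    symm
    apply stmt4_sqeq (norm_nonneg _) (norm_nonneg _)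
    rw [h1, mul_pow, mul_pow]
    have hcw : ‖((‖w‖ : ℝ) : ℂ)‖ = ‖w‖ := by simp
    rw [hcw]
    linear_combination (‖A u‖ ^ 2) * hnv

end main

theorem stmt_4 {H K : Type*} [NormedAddCommGroup H] [InnerProductSpace ℂ H]
    [NormedAddCommGroup K] [InnerProductSpace ℂ K]
    (hdim : 2 ≤ Module.rank ℂ H)
    (A : H → K) (hA : A ≠ 0)
    (hadd : ∀ x y, A (x + y) = A x + A y)
    (hdense : DenseRange A)
    (horth : ∀ x y : H, (inner ℂ x y : ℂ) = 0 → (inner ℂ (A x) (A y) : ℂ) = 0) :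
    ∃ γ : ℝ, 0 < γ ∧ ∀ x : H, ‖A x‖ = γ * ‖x‖ := by
  -- find a point where A is nonzero
  have hx0 : ∃ x : H, A x ≠ 0 := by
    by_contra hx
    push_neg at hx
    exact hA (funext fun x => hx x)
  obtain ⟨x₀, hx₀⟩ := hx0
  have hx₀0 : x₀ ≠ 0 := by
    intro h0
    rw [h0, stmt4_A0 A hadd] at hx₀
    exact hx₀ rfl
  have hxn : ‖x₀‖ ≠ 0 := norm_ne_zero_iff.mpr hx₀0
  set u₀ := ((‖x₀‖ : ℂ))⁻¹ • x₀ with hu₀def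
  have hu₀1 : ‖u₀‖ = 1 := by
    rw [hu₀def, norm_smul, norm_inv]
    simp only [Complex.norm_real, norm_norm]
    field_simp
  have hu₀0 : u₀ ≠ 0 := by
    intro h0; rw [h0] at hu₀1; simp at hu₀1
  -- the scaling lemma applied to arbitrary unit vectors
  have hscale : ∀ (e : H), ‖e‖ = 1 → ∀ a : ℂ, ‖A (a • e)‖ = ‖a‖ * ‖A e‖ := by
    intro e he a
    have he0 : e ≠ 0 := by intro h0; rw [h0] at he; simp at he
    obtain ⟨g, heg, hg1⟩ := stmt4_orth hdim e he0
    exact stmt4_scale A hadd horth e g he hg1 heg a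
  set γ := ‖A u₀‖ with hγdef
  have hγpos : 0 < γ := by
    rcases lt_or_eq_of_le (norm_nonneg (A u₀)) with hlt | heq
    · exact hlt
    · exfalso
      have hx₀u : x₀ = ((‖x₀‖ : ℝ) : ℂ) • u₀ := by
        rw [hu₀def, smul_smul]
        rw [mul_inv_cancel₀ (by simpa using hxn), one_smul]
      have hnorm := hscale u₀ hu₀1 ((‖x₀‖ : ℝ) : ℂ)
      rw [← hx₀u, ← heq, mul_zero] at hnorm
      exact hx₀ (norm_eq_zero.mp hnorm)
  refine ⟨γ, hγpos, ?_⟩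
  intro x
  by_cases hx : x = 0
  · rw [hx, stmt4_A0 A hadd]
    simp
  · have hxn' : ‖x‖ ≠ 0 := norm_ne_zero_iff.mpr hx
    set u := ((‖x‖ : ℂ))⁻¹ • x with hudef
    have hu1 : ‖u‖ = 1 := by
      rw [hudef, norm_smul, norm_inv]
      simp only [Complex.norm_real, norm_norm]
      field_simp
    have hxu : x = ((‖x‖ : ℝ) : ℂ) • u := by
      rw [hudef, smul_smul, mul_inv_cancel₀ (by simpa using hxn'), one_smul]
    have h1 := hscale u hu1 ((‖x‖ : ℝ) : ℂ)
    rw [← hxu] at h1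
    rw [h1, stmt4_unit hdim A hadd horth u u₀ hu1 hu₀1, hγdef]
    simp [mul_comm]
end

section
/- Let H, K be complex inner product spaces with dim H ≥ 2 and let A : H → K be a nonzero additive mapping with dense image preserving orthogonality. Then A is either complex-linear or conjugate-linear. -/
open Complex
set_option linter.unusedSectionVars false

local notation "⟪" x ", " y "⟫" => @inner ℂ _ _ x y

section aux
variable {H K : Type*} [NormedAddCommGroup H] [InnerProductSpace ℂ H]
  [NormedAddCommGroup K] [InnerProductSpace ℂ K]
variable {A : H → K}

private lemma op_zero (hadd : ∀ x y, A (x + y) = A x + A y) : A 0 = 0 := by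
  have h := hadd 0 0
  rw [add_zero] at h
  exact (left_eq_add.mp h)

private lemma op_neg (hadd : ∀ x y, A (x + y) = A x + A y) (x : H) : A (-x) = -A x := by
  have h := hadd x (-x)
  rw [add_neg_cancel, op_zero hadd] at h
  exact eq_neg_of_add_eq_zero_right h.symm

private lemma key (hadd : ∀ x y, A (x + y) = A x + A y)
    (horth : ∀ x y : H, ⟪x, y⟫ = 0 → ⟪A x, A y⟫ = 0)
    {x y : H} (hx : ‖x‖ = 1) (hy : ‖y‖ = 1) (hxy : ⟪x, y⟫ = 0) (μ β : ℂ) :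
    ⟪A (μ • y), A (β • y)⟫ = ⟪A x, A ((starRingEnd ℂ μ * β) • x)⟫ := by
  have hyx : ⟪y, x⟫ = 0 := by rw [← inner_conj_symm, hxy, map_zero]
  have hxx : ⟪x, x⟫ = 1 := by
    rw [inner_self_eq_norm_sq_to_K, hx]; norm_num
  have hyy : ⟪y, y⟫ = 1 := by
    rw [inner_self_eq_norm_sq_to_K, hy]; norm_num
  set c := starRingEnd ℂ μ * β with hc
  have h0 : ⟪x + μ • y, (-c) • x + β • y⟫ = 0 := by
    simp only [inner_add_left, inner_add_right, inner_smul_left, inner_smul_right,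
      hxy, hyx, hxx, hyy]
    simp [hc]
    ring
  have h1 := horth _ _ h0
  rw [hadd, hadd] at h1
  have hcross1 : ⟪A x, A (β • y)⟫ = 0 := by
    refine horth _ _ ?_
    rw [inner_smul_right, hxy, mul_zero]
  have hcross2 : ⟪A (μ • y), A ((-c) • x)⟫ = 0 := by
    refine horth _ _ ?_
    rw [inner_smul_right, inner_smul_left, hyx, mul_zero, mul_zero]
  have hneg : A ((-c) • x) = - A (c • x) := by
    rw [neg_smul, op_neg hadd]
  rw [inner_add_left, inner_add_right, inner_add_right, hcross1, hcross2, hneg,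
    inner_neg_right] at h1
  linear_combination h1


private lemma psi_spec (hadd : ∀ x y, A (x + y) = A x + A y)
    (horth : ∀ x y : H, ⟪x, y⟫ = 0 → ⟪A x, A y⟫ = 0)
    {e f : H} (he : ‖e‖ = 1) (hf : ‖f‖ = 1) (hef : ⟪e, f⟫ = 0) (l α : ℂ) :
    ⟪A (l • e), A (α • e)⟫ = ⟪A e, A ((starRingEnd ℂ l * α) • e)⟫ := by
  have hfe : ⟪f, e⟫ = 0 := by rw [← inner_conj_symm, hef, map_zero]
  have h1 := key hadd horth hf he hfe l α
  have h2 := key hadd horth he hf hef 1 (starRingEnd ℂ l * α)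
  rw [one_smul, map_one, one_mul] at h2
  exact h1.trans h2

private lemma psi_add (hadd : ∀ x y, A (x + y) = A x + A y) (e : H) (c d : ℂ) :
    ⟪A e, A ((c + d) • e)⟫ = ⟪A e, A (c • e)⟫ + ⟪A e, A (d • e)⟫ := by
  rw [add_smul, hadd, inner_add_right]

private lemma squeeze {S : ℝ → ℝ} (hadd : ∀ a b, S (a + b) = S a + S b)
    (hpos : ∀ t, 0 ≤ t → 0 ≤ S t) (t : ℝ) : S t = S 1 * t := by
  have hq : ∀ q : ℚ, S q = S 1 * q := by
    intro q
    have hhom : S ((q : ℚ) • (1 : ℝ)) = q • S 1 :=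
      (AddMonoidHom.mk' S hadd).toRatLinearMap.map_smul q 1
    rw [Rat.smul_one_eq_cast] at hhom
    rw [hhom, Rat.smul_def]
    ring
  have hmono : ∀ a b : ℝ, a ≤ b → S a ≤ S b := by
    intro a b hab
    have h := hadd a (b - a)
    rw [add_sub_cancel] at h
    have := hpos _ (sub_nonneg.mpr hab)
    linarith
  have hr : 0 ≤ S 1 := hpos 1 zero_le_one
  have hub : ∀ q : ℚ, t ≤ q → S t ≤ S 1 * q := fun q hq' => (hmono t q hq').trans_eq (hq q)
  have hlb : ∀ q : ℚ, (q : ℝ) ≤ t → S 1 * q ≤ S t := fun q hq' => (hq q).symm.trans_le (hmono q t hq')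
  refine le_antisymm ?_ ?_
  · by_contra hcon
    push_neg at hcon
    rcases eq_or_lt_of_le hr with hr0 | hr0
    · obtain ⟨q, hq1⟩ := exists_rat_gt t
      have := hub q hq1.le
      rw [← hr0] at this hcon
      simp at this hcon
      linarith
    · have htlt : t < S t / S 1 := by
        rw [lt_div_iff₀ hr0]
        linarith [mul_comm (S 1) t]
      obtain ⟨q, hq1, hq2⟩ := exists_rat_btwn htlt
      have h2 := hub q hq1.le
      have h3 := (lt_div_iff₀ hr0).mp hq2
      nlinarith
  · by_contra hcon
    push_neg at hcon
    rcases eq_or_lt_of_le hr with hr0 | hr0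
    · obtain ⟨q, hq1⟩ := exists_rat_lt t
      have := hlb q hq1.le
      rw [← hr0] at this hcon
      simp at this hcon
      linarith
    · have htlt : S t / S 1 < t := by
        rw [div_lt_iff₀ hr0]
        linarith [mul_comm (S 1) t]
      obtain ⟨q, hq1, hq2⟩ := exists_rat_btwn htlt
      have h2 := hlb q hq2.le
      have h3 := (div_lt_iff₀ hr0).mp hq1
      nlinarith


variable (hadd : ∀ x y, A (x + y) = A x + A y)
    (horth : ∀ x y : H, ⟪x, y⟫ = 0 → ⟪A x, A y⟫ = 0)
    {e f : H} (he : ‖e‖ = 1) (hf : ‖f‖ = 1) (hef : ⟪e, f⟫ = 0)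

include hadd horth he hf hef

private lemma psi_zero : ⟪A e, A ((0 : ℂ) • e)⟫ = 0 := by
  rw [zero_smul, op_zero hadd, inner_zero_right]

private lemma psi_real_nonneg (t : ℝ) (ht : 0 ≤ t) :
    ⟪A e, A ((t : ℂ) • e)⟫ = (‖A ((Real.sqrt t : ℂ) • e)‖ : ℂ) ^ 2 := by
  have h := psi_spec hadd horth he hf hef (Real.sqrt t : ℂ) (Real.sqrt t : ℂ)
  have harg : starRingEnd ℂ (Real.sqrt t : ℂ) * (Real.sqrt t : ℂ) = (t : ℂ) := by
    rw [conj_ofReal, ← Complex.ofReal_mul, Real.mul_self_sqrt ht]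
  rw [harg] at h
  rw [← h, inner_self_eq_norm_sq_to_K]
  norm_cast

private lemma psi_im_zero (t : ℝ) : (⟪A e, A ((t : ℂ) • e)⟫).im = 0 := by
  rcases le_or_gt 0 t with ht | ht
  · rw [psi_real_nonneg hadd horth he hf hef t ht]
    simp [← Complex.ofReal_pow]
  · have h := psi_add hadd e (t : ℂ) (-t : ℂ)
    rw [show ((t : ℂ) + (-t : ℂ)) = (0 : ℂ) by push_cast; ring,
      psi_zero hadd horth he hf hef] at h
    have h2 : ((-t : ℝ) : ℂ) = (-t : ℂ) := by push_cast; ring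
    have h3 := psi_real_nonneg hadd horth he hf hef (-t) (by linarith)
    rw [h2] at h3
    have : ⟪A e, A ((t : ℂ) • e)⟫ = -((‖A ((Real.sqrt (-t) : ℂ) • e)‖ : ℂ) ^ 2) := by
      rw [← h3]; linear_combination -h
    rw [this]
    simp [← Complex.ofReal_pow]

private lemma psi_real (t : ℝ) :
    ⟪A e, A ((t : ℂ) • e)⟫ = ((‖A e‖ ^ 2 * t : ℝ) : ℂ) := by
  set S : ℝ → ℝ := fun t => (⟪A e, A ((t : ℂ) • e)⟫).re with hS
  have hSadd : ∀ a b : ℝ, S (a + b) = S a + S b := by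
    intro a b
    have h := psi_add hadd e (a : ℂ) (b : ℂ)
    rw [show ((a : ℂ) + (b : ℂ)) = ((a + b : ℝ) : ℂ) by push_cast; ring] at h
    simp only [hS]
    rw [h, Complex.add_re]
  have hSpos : ∀ u : ℝ, 0 ≤ u → 0 ≤ S u := by
    intro u hu
    simp only [hS]
    rw [psi_real_nonneg hadd horth he hf hef u hu]
    simp [← Complex.ofReal_pow]
  have hS1 : S 1 = ‖A e‖ ^ 2 := by
    simp only [hS]
    rw [show ((1 : ℝ) : ℂ) = (1 : ℂ) by norm_num, one_smul,
      inner_self_eq_norm_sq_to_K]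
    simp [← Complex.ofReal_pow]
  have hsq := squeeze hSadd hSpos t
  rw [hS1] at hsq
  apply Complex.ext
  · rw [Complex.ofReal_re]
    exact hsq
  · rw [Complex.ofReal_im]
    exact psi_im_zero hadd horth he hf hef t

private lemma hpsi_of_real (a b : ℂ) (u : ℝ) (hu : starRingEnd ℂ a * b = (u : ℂ)) :
    ⟪A (a • e), A (b • e)⟫ = ((‖A e‖ ^ 2 * u : ℝ) : ℂ) := by
  rw [psi_spec hadd horth he hf hef a b, hu, psi_real hadd horth he hf hef]

private lemma line_homog (t : ℝ) (c : ℂ) :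
    A (((t : ℂ) * c) • e) = (t : ℂ) • A (c • e) := by
  have hc2 : starRingEnd ℂ c * c = ((Complex.normSq c : ℝ) : ℂ) := by
    rw [mul_comm, Complex.mul_conj]
  have h11 := hpsi_of_real hadd horth he hf hef ((t : ℂ) * c) ((t : ℂ) * c)
    (t ^ 2 * Complex.normSq c) (by
      rw [map_mul, conj_ofReal]; push_cast; linear_combination ((t:ℂ) * (t:ℂ)) * hc2)
  have h12 := hpsi_of_real hadd horth he hf hef ((t : ℂ) * c) c (t * Complex.normSq c) (by
      rw [map_mul, conj_ofReal]; push_cast; linear_combination (t:ℂ) * hc2)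
  have h21 := hpsi_of_real hadd horth he hf hef c ((t : ℂ) * c) (t * Complex.normSq c) (by
      push_cast; linear_combination (t:ℂ) * hc2)
  have h22 := hpsi_of_real hadd horth he hf hef c c (Complex.normSq c) hc2
  have hdd : ⟪A (((t : ℂ) * c) • e) - (t : ℂ) • A (c • e),
      A (((t : ℂ) * c) • e) - (t : ℂ) • A (c • e)⟫ = 0 := by
    simp only [inner_sub_left, inner_sub_right, inner_smul_left, inner_smul_right,
      h11, h12, h21, h22, conj_ofReal]
    push_cast
    ring
  have := inner_self_eq_zero.mp hdd
  exact sub_eq_zero.mp this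

private lemma psi_smul (t : ℝ) (c : ℂ) :
    ⟪A e, A (((t : ℂ) * c) • e)⟫ = (t : ℂ) * ⟪A e, A (c • e)⟫ := by
  rw [line_homog hadd horth he hf hef t c, inner_smul_right]

private lemma psi_conj (c : ℂ) :
    ⟪A e, A ((starRingEnd ℂ c) • e)⟫ = starRingEnd ℂ ⟪A e, A (c • e)⟫ := by
  have h1 := psi_spec hadd horth he hf hef c 1
  rw [one_smul, mul_one] at h1
  have h2 := psi_spec hadd horth he hf hef 1 c
  rw [one_smul, map_one, one_mul] at h2
  rw [← h1, ← h2, inner_conj_symm]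

private lemma psi_repr (c : ℂ) :
    ⟪A e, A (c • e)⟫ = ((‖A e‖ ^ 2 * c.re : ℝ) : ℂ)
      + (c.im : ℂ) * ⟪A e, A (I • e)⟫ := by
  have h := psi_add hadd e (c.re : ℂ) ((c.im : ℂ) * I)
  rw [Complex.re_add_im c] at h
  rw [h, psi_real hadd horth he hf hef, psi_smul hadd horth he hf hef]

private lemma gram_line {x : H} (hx : ‖x‖ = 1) (l m : ℂ) :
    ⟪A (l • x), A (m • x)⟫ = ⟪A e, A ((starRingEnd ℂ l * m) • e)⟫ := by
  have hee : ⟪e, e⟫ = 1 := by rw [inner_self_eq_norm_sq_to_K, he]; norm_num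
  by_cases hdep : ∃ c : ℂ, x = c • e
  · obtain ⟨c, rfl⟩ := hdep
    have hnc : ‖c‖ = 1 := by
      have h := norm_smul c e
      rw [hx, he, mul_one] at h
      exact h.symm
    have h2 : Complex.normSq c = 1 := by
      rw [Complex.normSq_eq_norm_sq, hnc, one_pow]
    have hcc : starRingEnd ℂ c * c = 1 := by
      rw [mul_comm, Complex.mul_conj, h2, Complex.ofReal_one]
    rw [smul_smul, smul_smul, psi_spec hadd horth he hf hef (l * c) (m * c)]
    have harg : starRingEnd ℂ (l * c) * (m * c) = starRingEnd ℂ l * m := by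
      rw [map_mul]
      linear_combination (starRingEnd ℂ l * m) * hcc
    rw [harg]
  · have hxx : ⟪x, x⟫ = 1 := by rw [inner_self_eq_norm_sq_to_K, hx]; norm_num
    set a := ⟪e, x⟫ with ha
    have hca : starRingEnd ℂ a * a = ((Complex.normSq a : ℝ) : ℂ) := by
      rw [mul_comm, Complex.mul_conj]
    set y0 := x - a • e with hy0
    have hy0ne : y0 ≠ 0 := by
      intro h0
      exact hdep ⟨a, by rw [← sub_eq_zero, ← hy0]; exact h0⟩
    set n := ‖y0‖ with hn
    have hnpos : 0 < n := norm_pos_iff.mpr hy0ne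
    set y := ((n⁻¹ : ℝ) : ℂ) • y0 with hy
    have hey0 : ⟪e, y0⟫ = 0 := by
      rw [hy0, inner_sub_right, inner_smul_right, hee, mul_one, ← ha, sub_self]
    have hey : ⟪e, y⟫ = 0 := by rw [hy, inner_smul_right, hey0, mul_zero]
    have hye : ⟪y, e⟫ = 0 := by rw [← inner_conj_symm, hey, map_zero]
    have hyn : ‖y‖ = 1 := by
      rw [hy, norm_smul, Complex.norm_real, Real.norm_eq_abs, abs_inv,
        abs_of_pos hnpos, ← hn, inv_mul_cancel₀ hnpos.ne']
    have hyy : ⟪y, y⟫ = 1 := by rw [inner_self_eq_norm_sq_to_K, hyn]; norm_num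
    have hxdec : x = a • e + (n : ℂ) • y := by
      rw [hy, smul_smul, show ((n : ℂ) * ((n⁻¹ : ℝ) : ℂ)) = 1 by
        push_cast; exact mul_inv_cancel₀ (by exact_mod_cast hnpos.ne'), one_smul, hy0]
      abel
    have hax' : ((Complex.normSq a : ℝ) : ℂ) + ((n ^ 2 : ℝ) : ℂ) = 1 := by
      have h1 : ⟪x, x⟫ = ((Complex.normSq a : ℝ) : ℂ) + ((n ^ 2 : ℝ) : ℂ) := by
        rw [hxdec]
        simp only [inner_add_left, inner_add_right, inner_smul_left, inner_smul_right,
          hee, hey, hye, hyy, conj_ofReal, mul_one, mul_zero, add_zero, zero_add]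
        push_cast
        linear_combination hca
      rw [← h1, hxx]
    have hAl : ∀ z : ℂ, A (z • x) = A ((z * a) • e) + A ((z * (n : ℂ)) • y) := by
      intro z
      rw [hxdec, smul_add, smul_smul, smul_smul, hadd]
    rw [hAl l, hAl m, inner_add_left, inner_add_right, inner_add_right]
    have hc1 : ⟪A ((l * a) • e), A ((m * (n : ℂ)) • y)⟫ = 0 :=
      horth _ _ (by rw [inner_smul_left, inner_smul_right, hey, mul_zero, mul_zero])
    have hc2 : ⟪A ((l * (n : ℂ)) • y), A ((m * a) • e)⟫ = 0 :=
      horth _ _ (by rw [inner_smul_left, inner_smul_right, hye, mul_zero, mul_zero])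
    rw [hc1, hc2]
    rw [psi_spec hadd horth he hf hef (l * a) (m * a),
      key hadd horth he hyn hey (l * (n : ℂ)) (m * (n : ℂ))]
    have e1 : starRingEnd ℂ (l * a) * (m * a)
        = ((Complex.normSq a : ℝ) : ℂ) * (starRingEnd ℂ l * m) := by
      rw [map_mul]
      linear_combination (starRingEnd ℂ l * m) * hca
    have e2 : starRingEnd ℂ (l * (n : ℂ)) * (m * (n : ℂ))
        = ((n ^ 2 : ℝ) : ℂ) * (starRingEnd ℂ l * m) := by
      rw [map_mul, conj_ofReal]
      push_cast
      ring
    rw [e1, e2, psi_smul hadd horth he hf hef, psi_smul hadd horth he hf hef]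
    linear_combination ⟪A e, A ((starRingEnd ℂ l * m) • e)⟫ * hax'

private lemma gram_global (u v : H) :
    ⟪A u, A v⟫ = ⟪A e, A (⟪u, v⟫ • e)⟫ := by
  rcases eq_or_ne u 0 with rfl | hu
  · rw [op_zero hadd, inner_zero_left, inner_zero_left, psi_zero hadd horth he hf hef]
  · have hnu : 0 < ‖u‖ := norm_pos_iff.mpr hu
    set x := ((‖u‖⁻¹ : ℝ) : ℂ) • u with hxdef
    have hx : ‖x‖ = 1 := by
      rw [hxdef, norm_smul, Complex.norm_real, Real.norm_eq_abs, abs_inv,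
        abs_of_pos hnu, inv_mul_cancel₀ hnu.ne']
    have hux : u = ((‖u‖ : ℝ) : ℂ) • x := by
      rw [hxdef, smul_smul, show ((‖u‖ : ℂ) * ((‖u‖⁻¹ : ℝ) : ℂ)) = 1 by
        push_cast; exact mul_inv_cancel₀ (by exact_mod_cast hnu.ne'), one_smul]
    set p := ⟪x, v⟫ with hp
    set w := v - p • x with hw
    have hxw : ⟪x, w⟫ = 0 := by
      have hxx : ⟪x, x⟫ = 1 := by rw [inner_self_eq_norm_sq_to_K, hx]; norm_num
      rw [hw, inner_sub_right, inner_smul_right, hxx, mul_one, ← hp, sub_self]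
    have huw : ⟪u, w⟫ = 0 := by
      rw [hux, inner_smul_left, hxw, mul_zero]
    have hAw : ⟪A u, A w⟫ = 0 := horth _ _ huw
    have hv : v = p • x + w := by rw [hw]; abel
    have hAv : A v = A (p • x) + A w := by rw [hv] at hp ⊢; rw [hadd]
    rw [hAv, inner_add_right, hAw, add_zero]
    nth_rewrite 1 [hux]
    rw [gram_line hadd horth he hf hef hx ((‖u‖ : ℝ) : ℂ) p, conj_ofReal]
    have : ⟪u, v⟫ = (‖u‖ : ℂ) * p := by
      nth_rewrite 1 [hux]
      rw [inner_smul_left, conj_ofReal, hp]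
    rw [this]

end aux

theorem stmt_5 {H K : Type*} [NormedAddCommGroup H] [InnerProductSpace ℂ H]
    [NormedAddCommGroup K] [InnerProductSpace ℂ K]
    (hdim : 2 ≤ Module.rank ℂ H)
    (A : H → K) (hA : A ≠ 0)
    (hadd : ∀ x y, A (x + y) = A x + A y)
    (hdense : DenseRange A)
    (horth : ∀ x y : H, (inner ℂ x y : ℂ) = 0 → (inner ℂ (A x) (A y) : ℂ) = 0) :
    (∀ (c : ℂ) (x : H), A (c • x) = c • A x) ∨
      (∀ (c : ℂ) (x : H), A (c • x) = (starRingEnd ℂ c) • A x) := by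
  classical
  -- a unit vector e
  have hnt : Nontrivial H := by
    rw [← rank_pos_iff_nontrivial (R := ℂ)]
    calc (0 : Cardinal) < 2 := by norm_num
    _ ≤ Module.rank ℂ H := hdim
  obtain ⟨u0, hu0⟩ := exists_ne (0 : H)
  have hnu0 : 0 < ‖u0‖ := norm_pos_iff.mpr hu0
  set e : H := ((‖u0‖⁻¹ : ℝ) : ℂ) • u0 with hedef
  have he : ‖e‖ = 1 := by
    rw [hedef, norm_smul, Complex.norm_real, Real.norm_eq_abs, abs_inv,
      abs_of_pos hnu0, inv_mul_cancel₀ hnu0.ne']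
  have hee : ⟪e, e⟫ = 1 := by rw [inner_self_eq_norm_sq_to_K, he]; norm_num
  -- a unit vector f orthogonal to e
  have hrank : ¬ (Module.rank ℂ H ≤ 1) := by
    intro hle
    have h2 := hdim.trans hle
    norm_num at h2
  rw [rank_le_one_iff] at hrank
  push_neg at hrank
  obtain ⟨x0, hx0⟩ := hrank e
  set f0 : H := x0 - ⟪e, x0⟫ • e with hf0def
  have hf0ne : f0 ≠ 0 := by
    intro h0
    have h1 : x0 - ⟪e, x0⟫ • e = 0 := by rw [← hf0def]; exact h0
    exact hx0 ⟪e, x0⟫ (sub_eq_zero.mp h1).symm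
  have hnf0 : 0 < ‖f0‖ := norm_pos_iff.mpr hf0ne
  set f : H := ((‖f0‖⁻¹ : ℝ) : ℂ) • f0 with hfdef
  have hf : ‖f‖ = 1 := by
    rw [hfdef, norm_smul, Complex.norm_real, Real.norm_eq_abs, abs_inv,
      abs_of_pos hnf0, inv_mul_cancel₀ hnf0.ne']
  have hef0 : ⟪e, f0⟫ = 0 := by
    rw [hf0def, inner_sub_right, inner_smul_right, hee, mul_one, sub_self]
  have hef : ⟪e, f⟫ = 0 := by rw [hfdef, inner_smul_right, hef0, mul_zero]
  -- abbreviations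
  set r : ℝ := ‖A e‖ ^ 2 with hrdef
  set s : ℂ := ⟪A e, A (I • e)⟫ with hsdef
  set b : ℝ := s.im with hbdef
  have hsre : s.re = 0 := by
    have h := psi_conj hadd horth he hf hef I
    rw [Complex.conj_I, neg_smul, op_neg hadd, inner_neg_right, ← hsdef] at h
    have h2 := congrArg Complex.re h
    rw [Complex.neg_re, Complex.conj_re] at h2
    linarith
  have hIe : ‖A (I • e)‖ = ‖A e‖ := by
    have h := psi_spec hadd horth he hf hef I I
    rw [show starRingEnd ℂ I * I = 1 by simp [Complex.conj_I], one_smul,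
      inner_self_eq_norm_sq_to_K, inner_self_eq_norm_sq_to_K] at h
    have h2 : ‖A (I • e)‖ ^ 2 = ‖A e‖ ^ 2 := by exact_mod_cast h
    nlinarith [norm_nonneg (A (I • e)), norm_nonneg (A e)]
  have hble : |b| ≤ r := by
    have h1 : ‖s‖ ≤ r := by
      rw [hsdef]
      calc ‖⟪A e, A (I • e)⟫‖ ≤ ‖A e‖ * ‖A (I • e)‖ := norm_inner_le_norm _ _
      _ = r := by rw [hIe, hrdef]; ring
    exact (Complex.abs_im_le_norm s).trans h1
  have hr0 : r ≠ 0 := by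
    intro h0
    apply hA
    funext u
    have hg := gram_global hadd horth he hf hef u u
    have huu : ⟪u, u⟫ = ((‖u‖ ^ 2 : ℝ) : ℂ) := by
      rw [inner_self_eq_norm_sq_to_K]; norm_cast
    rw [huu, psi_real hadd horth he hf hef, ← hrdef, h0] at hg
    rw [Pi.zero_apply]
    refine (inner_self_eq_zero (𝕜 := ℂ)).mp ?_
    rw [hg]
    norm_num
  have hrpos : 0 < r := lt_of_le_of_ne (by positivity) (Ne.symm hr0)
  -- density forces r ≤ |b|
  have hbge : r ≤ |b| := by
    by_contra hlt
    push_neg at hlt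
    set sr : ℝ := Real.sqrt r with hsrdef
    have hsr : sr ^ 2 = r := Real.sq_sqrt hrpos.le
    have hsrpos : 0 < sr := Real.sqrt_pos.mpr hrpos
    have hsrAe : ‖A e‖ = sr := by
      rw [hsrdef, hrdef, Real.sqrt_sq (norm_nonneg _)]
    set ε : ℝ := (r - |b|) / (8 * sr) with hεdef
    have hεpos : 0 < ε := div_pos (by linarith) (by positivity)
    obtain ⟨v, hv⟩ := hdense.exists_dist_lt (I • A e) hεpos
    rw [dist_eq_norm, norm_sub_rev] at hv
    -- hv : ‖A v - I • A e‖ < ε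
    have h1 : ‖⟪A e, A v⟫ - I * (r : ℂ)‖ ≤ sr * ε := by
      have heq : ⟪A e, A v - I • A e⟫ = ⟪A e, A v⟫ - I * (r : ℂ) := by
        rw [inner_sub_right, inner_smul_right, inner_self_eq_norm_sq_to_K]
        norm_cast
      calc ‖⟪A e, A v⟫ - I * (r : ℂ)‖ = ‖⟪A e, A v - I • A e⟫‖ := by
            rw [heq]
      _ ≤ ‖A e‖ * ‖A v - I • A e‖ := norm_inner_le_norm _ _
      _ ≤ sr * ε := by
            rw [hsrAe]
            exact mul_le_mul_of_nonneg_left hv.le hsrpos.le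
    set q : ℝ := (⟪e, v⟫ : ℂ).im with hqdef
    have h2 : ⟪A e, A v⟫ = ((r * (⟪e, v⟫ : ℂ).re : ℝ) : ℂ) + (q : ℂ) * s := by
      rw [gram_global hadd horth he hf hef e v, psi_repr hadd horth he hf hef, ← hrdef,
        ← hsdef, ← hqdef]
    have h3 : |q * b - r| ≤ sr * ε := by
      have him : (⟪A e, A v⟫ - I * (r : ℂ)).im = q * b - r := by
        rw [h2]
        simp [Complex.add_im, Complex.sub_im, Complex.mul_im, Complex.ofReal_im,
          Complex.ofReal_re, Complex.I_re, Complex.I_im, hsre, hbdef]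
      rw [← him]
      exact (Complex.abs_im_le_norm _).trans h1
    have h4 : ‖A v‖ ≤ sr + ε := by
      have hn1 : ‖A v‖ - ‖I • A e‖ ≤ ‖A v - I • A e‖ := norm_sub_norm_le _ _
      have hnIAe : ‖I • A e‖ = sr := by
        rw [norm_smul, Complex.norm_I, one_mul, hsrAe]
      linarith
    have h5 : ‖A v‖ ^ 2 = r * ‖v‖ ^ 2 := by
      have hg := gram_global hadd horth he hf hef v v
      have hvv : ⟪v, v⟫ = ((‖v‖ ^ 2 : ℝ) : ℂ) := by
        rw [inner_self_eq_norm_sq_to_K]; norm_cast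
      rw [hvv, psi_real hadd horth he hf hef, ← hrdef, inner_self_eq_norm_sq_to_K] at hg
      norm_cast at hg
      exact_mod_cast congrArg Complex.re hg
    have h6 : sr * ‖v‖ ≤ sr + ε := by
      refine le_of_pow_le_pow_left₀ two_ne_zero (by positivity) ?_
      calc (sr * ‖v‖) ^ 2 = r * ‖v‖ ^ 2 := by rw [mul_pow, hsr]
      _ = ‖A v‖ ^ 2 := h5.symm
      _ ≤ (sr + ε) ^ 2 := by nlinarith [norm_nonneg (A v)]
    have h7 : |q| ≤ ‖v‖ := by
      have hc1 : ‖⟪e, v⟫‖ ≤ ‖e‖ * ‖v‖ := by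
        exact norm_inner_le_norm _ _
      rw [he, one_mul] at hc1
      exact (Complex.abs_im_le_norm _).trans hc1
    have hqb : r - sr * ε ≤ q * b := by
      have := abs_le.mp h3
      linarith [this.1]
    have hqabs : q * b ≤ |q| * |b| := by rw [← abs_mul]; exact le_abs_self _
    have h8 : sr * |q| ≤ sr + ε :=
      le_trans (mul_le_mul_of_nonneg_left h7 hsrpos.le) h6
    have hε2 : 8 * sr * ε = r - |b| := by
      rw [hεdef]; field_simp
    have e1 : sr * (q * b) ≤ (sr * |q|) * |b| := by
      rw [mul_assoc]
      exact mul_le_mul_of_nonneg_left hqabs hsrpos.le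
    have e2 : (sr * |q|) * |b| ≤ (sr + ε) * |b| :=
      mul_le_mul_of_nonneg_right h8 (abs_nonneg b)
    have e3 : sr * (r - sr * ε) ≤ sr * (q * b) :=
      mul_le_mul_of_nonneg_left hqb hsrpos.le
    have hss : sr * (sr * ε) = r * ε := by
      rw [← mul_assoc, show sr * sr = r by rw [← hsr]; ring]
    have hb2 : ε * |b| ≤ ε * r := mul_le_mul_of_nonneg_left hble hεpos.le
    have e2' : (sr + ε) * |b| = sr * |b| + ε * |b| := by ring
    have h9 : sr * r - sr * |b| = 8 * (r * ε) := by
      calc sr * r - sr * |b| = sr * (8 * sr * ε) := by rw [hε2]; ring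
      _ = 8 * (sr * (sr * ε)) := by ring
      _ = 8 * (r * ε) := by rw [hss]
    have e3' : sr * r - sr * (sr * ε) ≤ sr * (q * b) := by
      have : sr * (r - sr * ε) = sr * r - sr * (sr * ε) := by ring
      linarith [e3]
    have hrε : 0 < r * ε := mul_pos hrpos hεpos
    linarith [e1, e2, e2', e3', hss, hb2, h9, hrε]
  have habs : |b| = r := le_antisymm hble hbge
  rcases (abs_eq hrpos.le).mp habs with hb | hb
  · -- linear case
    left
    have hs2 : s = (r : ℂ) * I := by
      apply Complex.ext
      · simp [hsre]
      · simp [hbdef ▸ hb]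
    have hpsi : ∀ c : ℂ, ⟪A e, A (c • e)⟫ = (r : ℂ) * c := by
      intro c
      rw [psi_repr hadd horth he hf hef c, ← hrdef, ← hsdef, hs2]
      conv_rhs => rw [← Complex.re_add_im c]
      push_cast
      ring
    have hGram : ∀ u v : H, ⟪A u, A v⟫ = (r : ℂ) * ⟪u, v⟫ := by
      intro u v
      rw [gram_global hadd horth he hf hef u v, hpsi]
    intro c u
    have hz : ⟪A (c • u) - c • A u, A (c • u) - c • A u⟫ = 0 := by
      simp only [inner_sub_left, inner_sub_right, inner_smul_left, inner_smul_right, hGram]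
      ring
    exact sub_eq_zero.mp (inner_self_eq_zero.mp hz)
  · -- conjugate-linear case
    right
    have hs2 : s = -((r : ℂ) * I) := by
      apply Complex.ext
      · simp [hsre]
      · simp [hbdef ▸ hb]
    have hpsi : ∀ c : ℂ, ⟪A e, A (c • e)⟫ = (r : ℂ) * (starRingEnd ℂ c) := by
      intro c
      rw [psi_repr hadd horth he hf hef c, ← hrdef, ← hsdef, hs2]
      conv_rhs => rw [← Complex.re_add_im c]
      simp only [map_add, map_mul, Complex.conj_ofReal, Complex.conj_I]
      push_cast
      ring
    have hGram : ∀ u v : H, ⟪A u, A v⟫ = (r : ℂ) * (starRingEnd ℂ ⟪u, v⟫) := by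
      intro u v
      rw [gram_global hadd horth he hf hef u v, hpsi]
    intro c u
    have hz : ⟪A (c • u) - (starRingEnd ℂ c) • A u,
        A (c • u) - (starRingEnd ℂ c) • A u⟫ = 0 := by
      simp only [inner_sub_left, inner_sub_right, inner_smul_left, inner_smul_right, hGram,
        map_mul, Complex.conj_conj]
      ring
    exact sub_eq_zero.mp (inner_self_eq_zero.mp hz)
end

section
/- Let H, K be complex inner product spaces with dim H ≥ 2 and A : H → K a nonzero additive map with dense image preserving orthogonality. Then there exists γ₁ > 0 such that either ⟨A x|A y⟩ = γ₁ ⟨x|y⟩ for all x, y ∈ H, or ⟨A x|A y⟩ = γ₁ ⟨y|x⟩ for all x, y ∈ H. -/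
open Complex ComplexConjugate

local notation "⟪" x ", " y "⟫" => (inner ℂ x y : ℂ)

section Aux
variable {H : Type*} [NormedAddCommGroup H] [InnerProductSpace ℂ H]

lemma exists_perp (hdim : 2 ≤ Module.rank ℂ H) (u : H) (hu : ‖u‖ = 1) :
    ∃ w : H, ‖w‖ = 1 ∧ ⟪u, w⟫ = 0 := by
  have h1 : ¬ (Module.rank ℂ H ≤ 1) := by
    intro h
    have : (2 : Cardinal) ≤ 1 := le_trans hdim h
    norm_num at this
  rw [rank_le_one_iff] at h1
  push_neg at h1
  obtain ⟨v, hv⟩ := h1 u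
  set z := v - ⟪u, v⟫ • u with hz
  have hzne : z ≠ 0 := by
    intro h0
    exact hv ⟪u, v⟫ (sub_eq_zero.mp (by rw [← hz]; exact h0)).symm
  have huu : ⟪u, u⟫ = 1 := by
    rw [inner_self_eq_norm_sq_to_K, hu]; norm_num
  have huz : ⟪u, z⟫ = 0 := by
    rw [hz, inner_sub_right, inner_smul_right, huu, mul_one, sub_self]
  refine ⟨(‖z‖ : ℝ)⁻¹ • z, ?_, ?_⟩
  · rw [norm_smul]
    simp [norm_eq_zero, hzne, norm_ne_zero_iff.mpr hzne]
  · rw [show ((‖z‖ : ℝ)⁻¹ • z : H) = ((‖z‖⁻¹ : ℝ) : ℂ) • z by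
      rw [← Complex.coe_smul]]
    rw [inner_smul_right, huz, mul_zero]

lemma exists_unit (hdim : 2 ≤ Module.rank ℂ H) : ∃ e : H, ‖e‖ = 1 := by
  have h1 : ¬ (Module.rank ℂ H ≤ 1) := by
    intro h
    have : (2 : Cardinal) ≤ 1 := le_trans hdim h
    norm_num at this
  rw [rank_le_one_iff] at h1
  push_neg at h1
  obtain ⟨v, hv⟩ := h1 0
  have hvne : v ≠ 0 := by
    intro h0
    exact hv 0 (by rw [h0, smul_zero])
  refine ⟨(‖v‖ : ℝ)⁻¹ • v, ?_⟩
  rw [norm_smul]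
  simp [norm_eq_zero, hvne, norm_ne_zero_iff.mpr hvne]

lemma inner_self_c {E : Type*} [NormedAddCommGroup E] [InnerProductSpace ℂ E] (x : E) :
    ⟪x, x⟫ = ((‖x‖ ^ 2 : ℝ) : ℂ) := by
  rw [inner_self_eq_norm_sq_to_K]; norm_num

lemma conj_eq_re_sub_im (z : ℂ) : (starRingEnd ℂ) z = ((z.re : ℝ) : ℂ) - ((z.im : ℝ) : ℂ) * Complex.I := by
  apply Complex.ext <;> simp

lemma norm_sub_sq_complex {E : Type*} [NormedAddCommGroup E] [InnerProductSpace ℂ E] (x y : E) :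
    ‖x - y‖ ^ 2 = ‖x‖ ^ 2 - 2 * (⟪x, y⟫).re + ‖y‖ ^ 2 := by
  have h := norm_sub_sq (𝕜 := ℂ) x y
  simpa using h

lemma additive_rat (g : ℝ → ℂ) (ha : ∀ s t, g (s + t) = g s + g t) (q : ℚ) :
    g (q : ℝ) = (q : ℂ) * g 1 := by
  have := map_ratCast_smul (AddMonoidHom.mk' g (fun a b => ha a b)) ℝ ℂ q (1 : ℝ)
  simpa [smul_eq_mul] using this

lemma additive_bdd (g : ℝ → ℂ) (ha : ∀ s t, g (s + t) = g s + g t) (M : ℝ)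
    (hb : ∀ t, ‖g t‖ ≤ M * |t|) : ∀ t : ℝ, g t = t * g 1 := by
  intro t
  have hM : 0 ≤ M := by
    have := hb 1
    simp only [abs_one, mul_one] at this
    exact le_trans (norm_nonneg _) this
  have key : ∀ ε : ℝ, 0 < ε → ‖g t - t * g 1‖ ≤ ε := by
    intro ε hε
    have hpos : 0 < M + ‖g 1‖ + 1 := by positivity
    obtain ⟨q, hq⟩ := exists_rat_near t (div_pos hε hpos)
    have hgq : g (q : ℝ) = (q : ℂ) * g 1 := additive_rat g ha q
    have hsplit : g t = g (t - q) + g (q : ℝ) := by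
      have := ha (t - q) (q : ℝ); rw [sub_add_cancel] at this; rw [this]
    have : g t - t * g 1 = g (t - q) + ((q : ℂ) - t) * g 1 := by
      rw [hsplit, hgq]; ring
    rw [this]
    have h1 : ‖g (t - ↑q)‖ ≤ M * |t - q| := hb _
    have h2 : ‖((q : ℂ) - t) * g 1‖ = |t - q| * ‖g 1‖ := by
      rw [norm_mul]
      congr 1
      have : ((q : ℂ) - t) = ((q - t : ℝ) : ℂ) := by push_cast; ring
      rw [this, Complex.norm_real, Real.norm_eq_abs, abs_sub_comm]
    calc ‖g (t - q) + ((q : ℂ) - t) * g 1‖ ≤ ‖g (t - ↑q)‖ + ‖((q : ℂ) - t) * g 1‖ :=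
          norm_add_le _ _
      _ ≤ M * |t - q| + |t - q| * ‖g 1‖ := by rw [h2]; exact add_le_add_left h1 _
      _ = (M + ‖g 1‖) * |t - q| := by ring
      _ ≤ (M + ‖g 1‖ + 1) * |t - q| := by nlinarith [abs_nonneg (t - (q : ℝ))]
      _ ≤ (M + ‖g 1‖ + 1) * (ε / (M + ‖g 1‖ + 1)) := by
          apply mul_le_mul_of_nonneg_left (le_of_lt hq) (le_of_lt hpos)
      _ = ε := by field_simp
  have h0 : ‖g t - t * g 1‖ ≤ 0 := le_of_forall_gt_imp_ge_of_dense (fun ε hε => key ε hε)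
  have := le_antisymm h0 (norm_nonneg _)
  rwa [norm_eq_zero, sub_eq_zero] at this

lemma additive_rat_real (g : ℝ → ℝ) (ha : ∀ s t, g (s + t) = g s + g t) (q : ℚ) :
    g (q : ℝ) = (q : ℝ) * g 1 := by
  have := map_ratCast_smul (AddMonoidHom.mk' g (fun a b => ha a b)) ℝ ℝ q (1 : ℝ)
  simpa [smul_eq_mul] using this

lemma additive_nonneg (g : ℝ → ℝ) (ha : ∀ s t, g (s + t) = g s + g t)
    (hp : ∀ t, 0 ≤ t → 0 ≤ g t) : ∀ t : ℝ, g t = t * g 1 := by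
  have hmono : ∀ s t : ℝ, s ≤ t → g s ≤ g t := by
    intro s t hst
    have : g t = g s + g (t - s) := by
      have := ha s (t - s); rw [add_sub_cancel] at this; rw [this]
    rw [this]
    have := hp (t - s) (by linarith)
    linarith
  have hg1 : 0 ≤ g 1 := hp 1 (by norm_num)
  intro t
  have key : ∀ ε : ℝ, 0 < ε → |g t - t * g 1| ≤ ε := by
    intro ε hε
    have hpos : 0 < g 1 + 1 := by linarith
    have hδ : 0 < ε / (g 1 + 1) := div_pos hε hpos
    obtain ⟨q1, hq1a, hq1b⟩ := exists_rat_btwn (show t - ε / (g 1 + 1) < t by linarith)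
    obtain ⟨q2, hq2a, hq2b⟩ := exists_rat_btwn (show t < t + ε / (g 1 + 1) by linarith)
    have hub : g t ≤ (q2 : ℝ) * g 1 := by
      rw [← additive_rat_real g ha q2]; exact hmono _ _ (le_of_lt hq2a)
    have hlb : (q1 : ℝ) * g 1 ≤ g t := by
      rw [← additive_rat_real g ha q1]; exact hmono _ _ (le_of_lt hq1b)
    have hd1 : ((q2 : ℝ) - t) * g 1 ≤ (ε / (g 1 + 1)) * g 1 :=
      mul_le_mul_of_nonneg_right (by linarith) hg1
    have hd2 : ((t : ℝ) - q1) * g 1 ≤ (ε / (g 1 + 1)) * g 1 :=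
      mul_le_mul_of_nonneg_right (by linarith) hg1
    have hd3 : (ε / (g 1 + 1)) * g 1 ≤ ε := by
      rw [div_mul_eq_mul_div, div_le_iff₀ hpos]
      nlinarith
    rw [abs_le]
    constructor
    · nlinarith
    · nlinarith
  have h0 : |g t - t * g 1| ≤ 0 := le_of_forall_gt_imp_ge_of_dense (fun ε hε => key ε hε)
  have := le_antisymm h0 (abs_nonneg _)
  rw [abs_eq_zero, sub_eq_zero] at this
  exact this

end Aux

theorem stmt_7 {H K : Type*} [NormedAddCommGroup H] [InnerProductSpace ℂ H]
    [NormedAddCommGroup K] [InnerProductSpace ℂ K]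
    (hdim : 2 ≤ Module.rank ℂ H)
    (A : H → K) (hA : A ≠ 0)
    (hadd : ∀ x y, A (x + y) = A x + A y)
    (hdense : DenseRange A)
    (horth : ∀ x y : H, (inner ℂ x y : ℂ) = 0 → (inner ℂ (A x) (A y) : ℂ) = 0) :
    ∃ γ₁ : ℝ, 0 < γ₁ ∧
      ((∀ x y : H, (inner ℂ (A x) (A y) : ℂ) = (γ₁ : ℂ) * (inner ℂ x y : ℂ)) ∨
        (∀ x y : H, (inner ℂ (A x) (A y) : ℂ) = (γ₁ : ℂ) * (inner ℂ y x : ℂ))) := by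
  classical
  -- basic additivity facts
  have hA0 : A 0 = 0 := by
    have h := hadd 0 0
    rw [add_zero] at h
    exact (left_eq_add.mp h)
  have hAneg : ∀ x, A (-x) = - A x := by
    intro x
    have h := hadd x (-x)
    rw [add_neg_cancel, hA0] at h
    exact eq_neg_of_add_eq_zero_right h.symm
  have hAsub : ∀ x y, A (x - y) = A x - A y := by
    intro x y
    rw [sub_eq_add_neg, hadd, hAneg, sub_eq_add_neg]
  -- the key orthogonality identity
  have key : ∀ u w : H, ‖u‖ = 1 → ‖w‖ = 1 → ⟪u, w⟫ = 0 → ∀ l m t : ℂ,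
      ⟪A (l • u), A ((t * conj m) • u)⟫ = ⟪A (m • w), A ((t * conj l) • w)⟫ := by
    intro u w hu hw huw l m t
    have huu : ⟪u, u⟫ = 1 := by rw [inner_self_eq_norm_sq_to_K, hu]; norm_num
    have hww : ⟪w, w⟫ = 1 := by rw [inner_self_eq_norm_sq_to_K, hw]; norm_num
    have hwu : ⟪w, u⟫ = 0 := by rw [← inner_conj_symm, huw, map_zero]
    have hxy : ⟪l • u + m • w, (t * conj m) • u - (t * conj l) • w⟫ = 0 := by
      simp only [inner_add_left, inner_sub_right, inner_smul_left, inner_smul_right,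
        huu, hww, huw, hwu]
      ring
    have h0 := horth _ _ hxy
    rw [hadd, hAsub, inner_add_left, inner_sub_right, inner_sub_right] at h0
    have hz1 : ⟪A (l • u), A ((t * conj l) • w)⟫ = 0 := by
      apply horth
      rw [inner_smul_left, inner_smul_right, huw]; ring
    have hz2 : ⟪A (m • w), A ((t * conj m) • u)⟫ = 0 := by
      apply horth
      rw [inner_smul_left, inner_smul_right, hwu]; ring
    rw [hz1, hz2] at h0
    linear_combination h0
  -- reduction of products to the "phi" function on a single unit vector
  have hplane : ∀ u : H, ‖u‖ = 1 → ∀ l t : ℂ,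
      ⟪A (l • u), A (t • u)⟫ = ⟪A u, A ((t * conj l) • u)⟫ := by
    intro u hu l t
    obtain ⟨w, hw, huw⟩ := exists_perp hdim u hu
    have hwu : ⟪w, u⟫ = 0 := by rw [← inner_conj_symm, huw, map_zero]
    have h1 := key u w hu hw huw l 1 t
    have h2 := key w u hw hu hwu 1 1 (t * conj l)
    simp only [map_one, mul_one, one_smul] at h1 h2
    rw [h1, h2]
  -- fix a unit vector e
  obtain ⟨e, he⟩ := exists_unit hdim
  have hee : ⟪e, e⟫ = 1 := by rw [inner_self_eq_norm_sq_to_K, he]; norm_num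
  have hphi_add : ∀ (u : H) (s t : ℂ),
      ⟪A u, A ((s + t) • u)⟫ = ⟪A u, A (s • u)⟫ + ⟪A u, A (t • u)⟫ := by
    intro u s t
    rw [add_smul, hadd, inner_add_right]
  have hconj : ∀ u : H, ‖u‖ = 1 → ∀ s : ℂ,
      ⟪A u, A ((conj s) • u)⟫ = conj ⟪A u, A (s • u)⟫ := by
    intro u hu s
    have h1 := hplane u hu s 1
    rw [one_smul, one_mul] at h1
    rw [← h1]
    exact (inner_conj_symm _ _).symm
  have hrealval : ∀ u, ‖u‖ = 1 → ∀ r : ℝ, (⟪A u, A ((r : ℂ) • u)⟫).im = 0 := by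
    intro u hu r
    have h := hconj u hu (r : ℂ)
    rw [Complex.conj_ofReal] at h
    exact Complex.conj_eq_iff_im.mp h.symm
  have hposval : ∀ u, ‖u‖ = 1 → ∀ r : ℝ, 0 ≤ r → 0 ≤ (⟪A u, A ((r : ℂ) • u)⟫).re := by
    intro u hu r hr
    have h1 := hplane u hu (Real.sqrt r : ℂ) (Real.sqrt r : ℂ)
    rw [Complex.conj_ofReal] at h1
    have h2 : ((Real.sqrt r : ℝ) : ℂ) * ((Real.sqrt r : ℝ) : ℂ) = (r : ℂ) := by
      rw [← Complex.ofReal_mul, Real.mul_self_sqrt hr]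
    rw [h2] at h1
    rw [← h1, inner_self_c, Complex.ofReal_re]
    positivity
  set c : ℝ := ‖A e‖ ^ 2 with hc
  have hre : ∀ r : ℝ, ⟪A e, A ((r : ℂ) • e)⟫ = ((r * c : ℝ) : ℂ) := by
    have hgadd : ∀ s t : ℝ, (⟪A e, A (((s + t : ℝ) : ℂ) • e)⟫).re
        = (⟪A e, A ((s : ℂ) • e)⟫).re + (⟪A e, A ((t : ℂ) • e)⟫).re := by
      intro s t
      rw [Complex.ofReal_add, hphi_add, Complex.add_re]
    have hglin := additive_nonneg (fun r => (⟪A e, A ((r : ℂ) • e)⟫).re) hgadd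
      (fun t ht => hposval e he t ht)
    have hg1 : (⟪A e, A (((1 : ℝ) : ℂ) • e)⟫).re = c := by
      rw [Complex.ofReal_one, one_smul, inner_self_c, Complex.ofReal_re]
    intro r
    apply Complex.ext
    · rw [Complex.ofReal_re]
      have h2 : (⟪A e, A ((r : ℂ) • e)⟫).re
          = r * (⟪A e, A (((1 : ℝ) : ℂ) • e)⟫).re := hglin r
      rw [hg1] at h2
      exact h2
    · rw [Complex.ofReal_im]
      exact hrealval e he r
  set b : ℝ := (⟪A e, A (I • e)⟫).im with hb
  have hre0 : (⟪A e, A (I • e)⟫).re = 0 := by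
    have h := hconj e he I
    rw [Complex.conj_I, neg_smul, hAneg, inner_neg_right] at h
    have h2 := congrArg Complex.re h
    rw [Complex.neg_re, Complex.conj_re] at h2
    linarith
  have hIpure : ⟪A e, A (I • e)⟫ = (b : ℂ) * I := by
    apply Complex.ext
    · rw [hre0]; simp
    · simp [hb]
  have him : ∀ r : ℝ, ⟪A e, A (((r : ℂ) * I) • e)⟫ = (r : ℂ) * ((b : ℂ) * I) := by
    have hhadd : ∀ s t : ℝ, ⟪A e, A ((((s + t : ℝ) : ℂ) * I) • e)⟫
        = ⟪A e, A (((s : ℂ) * I) • e)⟫ + ⟪A e, A (((t : ℂ) * I) • e)⟫ := by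
      intro s t
      rw [Complex.ofReal_add, add_mul, hphi_add]
    have hbnd : ∀ r : ℝ, ‖⟪A e, A (((r : ℂ) * I) • e)⟫‖ ≤ c * |r| := by
      intro r
      have hcs := norm_inner_le_norm (𝕜 := ℂ) (A e) (A (((r : ℂ) * I) • e))
      have hn2 : ⟪A (((r : ℂ) * I) • e), A (((r : ℂ) * I) • e)⟫ = ((r ^ 2 * c : ℝ) : ℂ) := by
        have h1 := hplane e he ((r : ℂ) * I) ((r : ℂ) * I)
        have h2 : ((r : ℂ) * I) * conj ((r : ℂ) * I) = ((r ^ 2 : ℝ) : ℂ) := by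
          rw [map_mul, Complex.conj_ofReal, Complex.conj_I]
          have : (I : ℂ) * I = -1 := Complex.I_mul_I
          push_cast
          linear_combination (-(r : ℂ) * (r : ℂ)) * this
        rw [h1, h2, hre]
      have hnorm : ‖A (((r : ℂ) * I) • e)‖ = |r| * Real.sqrt c := by
        have h3 := inner_self_c (A (((r : ℂ) * I) • e))
        rw [hn2] at h3
        have h4 : ‖A (((r : ℂ) * I) • e)‖ ^ 2 = r ^ 2 * c := by
          exact_mod_cast h3.symm
        have h5 : ‖A (((r : ℂ) * I) • e)‖ = Real.sqrt (r ^ 2 * c) := by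
          rw [← h4, Real.sqrt_sq (norm_nonneg _)]
        rw [h5, Real.sqrt_mul (sq_nonneg r), Real.sqrt_sq_eq_abs]
      have hAe : ‖A e‖ = Real.sqrt c := by
        rw [hc, Real.sqrt_sq (norm_nonneg _)]
      calc ‖⟪A e, A (((r : ℂ) * I) • e)⟫‖ ≤ ‖A e‖ * ‖A (((r : ℂ) * I) • e)‖ := hcs
        _ = Real.sqrt c * (|r| * Real.sqrt c) := by rw [hAe, hnorm]
        _ = c * |r| := by
            rw [show Real.sqrt c * (|r| * Real.sqrt c) = (Real.sqrt c * Real.sqrt c) * |r| by ring,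
              Real.mul_self_sqrt (by positivity)]
    have := additive_bdd (fun r => ⟪A e, A (((r : ℂ) * I) • e)⟫) hhadd c hbnd
    intro r
    have h := this r
    simp only [Complex.ofReal_one, one_mul] at h
    rw [h, hIpure]
  have hlin : ∀ s : ℂ, ⟪A e, A (s • e)⟫ = (c : ℂ) * (s.re : ℂ) + (b : ℂ) * (s.im : ℂ) * I := by
    intro s
    have hsplit : s = ((s.re : ℝ) : ℂ) + ((s.im : ℝ) : ℂ) * I := (Complex.re_add_im s).symm
    calc ⟪A e, A (s • e)⟫ = ⟪A e, A ((((s.re : ℝ) : ℂ) + ((s.im : ℝ) : ℂ) * I) • e)⟫ := by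
          rw [← hsplit]
      _ = ⟪A e, A (((s.re : ℝ) : ℂ) • e)⟫ + ⟪A e, A ((((s.im : ℝ) : ℂ) * I) • e)⟫ :=
          hphi_add e _ _
      _ = ((s.re * c : ℝ) : ℂ) + (s.im : ℂ) * ((b : ℂ) * I) := by rw [hre, him]
      _ = (c : ℂ) * (s.re : ℂ) + (b : ℂ) * (s.im : ℂ) * I := by push_cast; ring
  -- uniformity: the phi function is the same for every unit vector
  have huni : ∀ u : H, ‖u‖ = 1 → ∀ s : ℂ, ⟪A u, A (s • u)⟫ = ⟪A e, A (s • e)⟫ := by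
    intro u hu s
    by_cases hcol : ∃ r : ℂ, r • e = u
    · obtain ⟨r, hr⟩ := hcol
      have hrn : ‖r‖ = 1 := by
        have h1 : ‖u‖ = ‖r‖ * ‖e‖ := by rw [← hr, norm_smul]
        rw [he, mul_one, hu] at h1
        exact h1.symm
      have hr1 : r * conj r = 1 := by
        rw [Complex.mul_conj]
        rw [show Complex.normSq r = ‖r‖ ^ 2 from by
          rw [← Complex.sq_norm]]
        rw [hrn]; norm_num
      have hsu : s • u = (s * r) • e := by rw [← hr, smul_smul]
      conv_lhs => rw [hsu, ← hr]
      rw [hplane e he r (s * r)]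
      rw [show s * r * conj r = s from by linear_combination s * hr1]
    · set α := ⟪e, u⟫ with hα
      set z := u - α • e with hzdef
      have hzne : z ≠ 0 := by
        intro h0
        exact hcol ⟨α, (sub_eq_zero.mp (by rw [← hzdef]; exact h0)).symm⟩
      have hez : ⟪e, z⟫ = 0 := by
        rw [hzdef, inner_sub_right, inner_smul_right, hee, mul_one, sub_self]
      set w : H := ((‖z‖⁻¹ : ℝ) : ℂ) • z with hwdef
      have hwnorm : ‖w‖ = 1 := by
        rw [hwdef, norm_smul, Complex.norm_real, Real.norm_eq_abs, abs_inv, abs_norm]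
        field_simp [norm_ne_zero_iff.mpr hzne]
      have hew : ⟪e, w⟫ = 0 := by rw [hwdef, inner_smul_right, hez, mul_zero]
      have hwe : ⟪w, e⟫ = 0 := by rw [← inner_conj_symm, hew, map_zero]
      have hww : ⟪w, w⟫ = 1 := by rw [inner_self_c, hwnorm]; norm_num
      set bet : ℂ := ((‖z‖ : ℝ) : ℂ) with hbet
      have hzw : z = bet • w := by
        rw [hwdef, hbet, smul_smul, show ((‖z‖ : ℝ) : ℂ) * ((‖z‖⁻¹ : ℝ) : ℂ) = 1 from by
          rw [← Complex.ofReal_mul, mul_inv_cancel₀ (norm_ne_zero_iff.mpr hzne)]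
          norm_num]
        rw [one_smul]
      have hdecomp : u = α • e + bet • w := by rw [← hzw, hzdef]; abel
      have hbetconj : conj bet = bet := Complex.conj_ofReal _
      have hnormsum : α * conj α + bet * bet = 1 := by
        have h1 : ⟪u, u⟫ = 1 := by rw [inner_self_c, hu]; norm_num
        have h2 : ⟪u, u⟫ = conj α * α + conj bet * bet := by
          conv_lhs => rw [hdecomp]
          simp only [inner_add_left, inner_add_right, inner_smul_left, inner_smul_right,
            hee, hew, hwe, hww]
          ring
        rw [h2] at h1
        rw [hbetconj] at h1
        linear_combination h1
      have hphiew : ∀ t : ℂ, ⟪A e, A (t • e)⟫ = ⟪A w, A (t • w)⟫ := by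
        intro t
        have hk := key e w he hwnorm hew 1 1 t
        simp only [map_one, mul_one, one_smul] at hk
        exact hk
      have hAu : A u = A (α • e) + A (bet • w) := by
        conv_lhs => rw [hdecomp]
        rw [hadd]
      have hAsu : A (s • u) = A ((s * α) • e) + A ((s * bet) • w) := by
        conv_lhs => rw [hdecomp]
        rw [smul_add, smul_smul, smul_smul, hadd]
      have hcr1 : ⟪A (α • e), A ((s * bet) • w)⟫ = 0 := by
        apply horth
        rw [inner_smul_left, inner_smul_right, hew]; ring
      have hcr2 : ⟪A (bet • w), A ((s * α) • e)⟫ = 0 := by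
        apply horth
        rw [inner_smul_left, inner_smul_right, hwe]; ring
      rw [hAu, hAsu, inner_add_left, inner_add_right, inner_add_right, hcr1, hcr2]
      rw [hplane e he α (s * α), hplane w hwnorm bet (s * bet), ← hphiew]
      rw [add_zero, zero_add]
      rw [← hphi_add]
      rw [show s * α * conj α + s * bet * conj bet = s from by
        rw [hbetconj]; linear_combination s * hnormsum]
  -- the global formula
  have hglobal : ∀ x y : H,
      ⟪A x, A y⟫ = (c : ℂ) * ((inner ℂ x y : ℂ).re : ℂ) + (b : ℂ) * ((inner ℂ x y : ℂ).im : ℂ) * I := by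
    intro x y
    by_cases hx : x = 0
    · rw [hx, hA0]
      simp
    · have hxn : ‖x‖ ≠ 0 := norm_ne_zero_iff.mpr hx
      set u : H := ((‖x‖⁻¹ : ℝ) : ℂ) • x with hudef
      have hun : ‖u‖ = 1 := by
        rw [hudef, norm_smul, Complex.norm_real, Real.norm_eq_abs, abs_inv, abs_norm]
        field_simp [hxn]
      have hxu : x = ((‖x‖ : ℝ) : ℂ) • u := by
        rw [hudef, smul_smul, ← Complex.ofReal_mul, mul_inv_cancel₀ hxn]
        norm_num
      have huu : ⟪u, u⟫ = 1 := by rw [inner_self_c, hun]; norm_num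
      set z := y - ⟪u, y⟫ • u with hzdef
      have huz : ⟪u, z⟫ = 0 := by
        rw [hzdef, inner_sub_right, inner_smul_right, huu, mul_one, sub_self]
      have hxz : ⟪x, z⟫ = 0 := by
        conv_lhs => rw [hxu]
        rw [inner_smul_left, huz, mul_zero]
      have hyd : y = ⟪u, y⟫ • u + z := by rw [hzdef]; abel
      have hAy : A y = A (⟪u, y⟫ • u) + A z := by
        conv_lhs => rw [hyd]
        rw [hadd]
      have hinner : ⟪x, y⟫ = ((‖x‖ : ℝ) : ℂ) * ⟪u, y⟫ := by
        conv_lhs => rw [hxu]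
        rw [inner_smul_left, Complex.conj_ofReal]
      rw [hAy, inner_add_right, horth x z hxz, add_zero]
      conv_lhs => rw [hxu]
      rw [hplane u hun _ _, Complex.conj_ofReal]
      rw [huni u hun (⟪u, y⟫ * ((‖x‖ : ℝ) : ℂ))]
      rw [hlin]
      rw [show ⟪u, y⟫ * ((‖x‖ : ℝ) : ℂ) = ⟪x, y⟫ from by rw [hinner]; ring]
  -- norms of images
  have hnormA : ∀ x : H, ‖A x‖ ^ 2 = c * ‖x‖ ^ 2 := by
    intro x
    have h1 := hglobal x x
    rw [inner_self_c x, inner_self_c (A x), Complex.ofReal_re, Complex.ofReal_im] at h1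
    have h2 : ((‖A x‖ ^ 2 : ℝ) : ℂ) = (((c * ‖x‖ ^ 2) : ℝ) : ℂ) := by
      rw [h1]; push_cast; ring
    exact_mod_cast h2
  have hcpos : 0 < c := by
    rcases lt_or_eq_of_le (show 0 ≤ c from by rw [hc]; positivity) with h | h
    · exact h
    · exfalso
      apply hA
      funext x
      have h1 := hnormA x
      rw [← h, zero_mul] at h1
      have h2 : ‖A x‖ = 0 := by
        have := sq_nonneg ‖A x‖
        nlinarith [norm_nonneg (A x)]
      simpa [norm_eq_zero] using h2
  have hbc : |b| ≤ c := by
    have h1 : ‖⟪A e, A (I • e)⟫‖ ≤ ‖A e‖ * ‖A (I • e)‖ := norm_inner_le_norm _ _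
    have h2 : ‖A (I • e)‖ ^ 2 = c := by
      rw [hnormA, norm_smul, Complex.norm_I, he]; ring
    have h3 : ‖A e‖ ^ 2 = c := by rw [hnormA, he]; ring
    have h4 : ‖A e‖ = Real.sqrt c := by rw [← h3, Real.sqrt_sq (norm_nonneg _)]
    have h5 : ‖A (I • e)‖ = Real.sqrt c := by rw [← h2, Real.sqrt_sq (norm_nonneg _)]
    have h6 : ‖((b : ℝ) : ℂ) * I‖ = |b| := by
      rw [norm_mul, Complex.norm_I, Complex.norm_real, Real.norm_eq_abs, mul_one]
    rw [hIpure, h6, h4, h5, Real.mul_self_sqrt hcpos.le] at h1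
    exact h1
  refine ⟨c, hcpos, ?_⟩
  by_cases hbeq : b = c
  · left
    intro x y
    rw [hglobal x y, hbeq]
    linear_combination (c : ℂ) * (Complex.re_add_im (inner ℂ x y : ℂ))
  by_cases hbeq' : b = -c
  · right
    intro x y
    rw [hglobal x y, hbeq']
    have hyx : (inner ℂ y x : ℂ) = (((inner ℂ x y : ℂ).re : ℝ) : ℂ) - (((inner ℂ x y : ℂ).im : ℝ) : ℂ) * I := by
      rw [show (inner ℂ y x : ℂ) = conj (inner ℂ x y : ℂ) from (inner_conj_symm y x).symm]
      exact conj_eq_re_sub_im _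
    rw [hyx]
    push_cast
    ring
  · exfalso
    have habs : |b| ≠ c := by
      intro h
      rcases (abs_eq hcpos.le).mp h with h' | h'
      · exact hbeq h'
      · exact hbeq' h'
    have hblt : |b| < c := lt_of_le_of_ne hbc habs
    obtain ⟨hb1, hb2⟩ := abs_lt.mp hblt
    set gp : ℝ := (c + b) / 2 with hgpdef
    set gm : ℝ := (c - b) / 2 with hgmdef
    have hgppos : 0 < gp := by rw [hgpdef]; linarith
    have hgmpos : 0 < gm := by rw [hgmdef]; linarith
    set P : K := A e - I • A (I • e) with hPdef
    set Q : K := A e + I • A (I • e) with hQdef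
    have hIex : ∀ x : H, ⟪I • e, x⟫ = -I * ⟪e, x⟫ := by
      intro x
      rw [inner_smul_left, Complex.conj_I]
    have hIre : ∀ x : H, (⟪I • e, x⟫).re = (⟪e, x⟫).im := by
      intro x; rw [hIex x]; simp
    have hIim : ∀ x : H, (⟪I • e, x⟫).im = -(⟪e, x⟫).re := by
      intro x; rw [hIex x]; simp
    have hPx : ∀ x : H, ⟪P, A x⟫ = ((c : ℂ) + (b : ℂ)) * ⟪e, x⟫ := by
      intro x
      rw [hPdef, inner_sub_left, inner_smul_left, Complex.conj_I,
        hglobal e x, hglobal (I • e) x, hIre x, hIim x]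
      push_cast
      linear_combination ((c : ℂ) + (b : ℂ)) * (Complex.re_add_im (inner ℂ e x : ℂ))
        - (((inner ℂ e x : ℂ).re : ℂ) * (b : ℂ)) * Complex.I_sq
    have hQx : ∀ x : H, ⟪Q, A x⟫ = ((c : ℂ) - (b : ℂ)) * conj ⟪e, x⟫ := by
      intro x
      rw [hQdef, inner_add_left, inner_smul_left, Complex.conj_I,
        hglobal e x, hglobal (I • e) x, hIre x, hIim x]
      rw [conj_eq_re_sub_im (inner ℂ e x : ℂ)]
      push_cast
      linear_combination (((inner ℂ e x : ℂ).re : ℂ) * (b : ℂ)) * Complex.I_sq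
    have heI : ⟪e, I • e⟫ = I := by rw [inner_smul_right, hee, mul_one]
    have hPP : ⟪P, P⟫ = ((2 * (c + b) : ℝ) : ℂ) := by
      conv_lhs => rw [show (P : K) = A e - I • A (I • e) from hPdef]
      rw [inner_sub_right, inner_smul_right, hPx e, hPx (I • e), hee, heI]
      push_cast
      linear_combination (-(c : ℂ) - (b : ℂ)) * Complex.I_sq
    have hQQ : ⟪Q, Q⟫ = ((2 * (c - b) : ℝ) : ℂ) := by
      conv_lhs => rw [show (Q : K) = A e + I • A (I • e) from hQdef]
      rw [inner_add_right, inner_smul_right, hQx e, hQx (I • e), hee, heI]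
      rw [map_one, conj_eq_re_sub_im I]
      push_cast
      simp only [Complex.I_re, Complex.I_im]
      push_cast
      linear_combination (-(c : ℂ) + (b : ℂ)) * Complex.I_sq
    have hPQ : ⟪P, Q⟫ = 0 := by
      conv_lhs => rw [show (Q : K) = A e + I • A (I • e) from hQdef]
      rw [inner_add_right, inner_smul_right, hPx e, hPx (I • e), hee, heI]
      linear_combination ((c : ℂ) + (b : ℂ)) * Complex.I_sq
    have hQP : ⟪Q, P⟫ = 0 := by
      rw [show (inner ℂ Q P : ℂ) = conj (inner ℂ P Q : ℂ) from (inner_conj_symm Q P).symm, hPQ,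
        map_zero]
    set k : K := ((gm : ℝ) : ℂ) • P - ((gp : ℝ) : ℂ) • Q with hkdef
    have hkA : ∀ x : H, ⟪k, A x⟫ = ((gm : ℝ) : ℂ) * (((c : ℂ) + (b : ℂ)) * ⟪e, x⟫)
        - ((gp : ℝ) : ℂ) * (((c : ℂ) - (b : ℂ)) * conj ⟪e, x⟫) := by
      intro x
      rw [hkdef, inner_sub_left, inner_smul_left, inner_smul_left, Complex.conj_ofReal,
        Complex.conj_ofReal, hPx x, hQx x]
    have hkre : ∀ x : H, (⟪k, A x⟫).re = 0 := by
      intro x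
      rw [hkA x, conj_eq_re_sub_im (inner ℂ e x : ℂ)]
      rw [hgpdef, hgmdef]
      simp only [Complex.sub_re, Complex.mul_re, Complex.mul_im, Complex.add_re, Complex.add_im,
        Complex.sub_im, Complex.ofReal_re, Complex.ofReal_im, Complex.I_re, Complex.I_im]
      ring
    have hkk : ⟪k, k⟫ = ((4 * gp * gm * c : ℝ) : ℂ) := by
      have h1 : ⟪k, k⟫ = ((gm : ℝ) : ℂ) * (((gm : ℝ) : ℂ) * ⟪P, P⟫
          - ((gp : ℝ) : ℂ) * ⟪Q, P⟫)
          - ((gp : ℝ) : ℂ) * (((gm : ℝ) : ℂ) * ⟪P, Q⟫ - ((gp : ℝ) : ℂ) * ⟪Q, Q⟫) := by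
        conv_lhs => rw [hkdef]
        simp only [inner_sub_left, inner_sub_right, inner_smul_left, inner_smul_right,
          Complex.conj_ofReal]
        try ring
      rw [h1, hPP, hQQ, hPQ, hQP]
      rw [hgpdef, hgmdef]
      push_cast
      ring
    have hknorm : ‖k‖ ^ 2 = 4 * gp * gm * c := by
      have h1 := inner_self_c k
      rw [hkk] at h1
      exact_mod_cast h1.symm
    have hδpos : 0 < 4 * gp * gm * c := by positivity
    obtain ⟨x, hx⟩ := hdense.exists_dist_lt k (Real.sqrt_pos.mpr hδpos)
    have hdist : ‖k - A x‖ ^ 2 = ‖k‖ ^ 2 - 2 * (⟪k, A x⟫).re + ‖A x‖ ^ 2 := by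
      exact norm_sub_sq_complex k (A x)
    have hge : 4 * gp * gm * c ≤ ‖k - A x‖ ^ 2 := by
      rw [hdist, hknorm, hkre x]
      nlinarith [sq_nonneg ‖A x‖]
    have hlt : ‖k - A x‖ < Real.sqrt (4 * gp * gm * c) := by
      rw [← dist_eq_norm]
      exact hx
    have hsq : ‖k - A x‖ ^ 2 < 4 * gp * gm * c := by
      have h2 : Real.sqrt (4 * gp * gm * c) ^ 2 = 4 * gp * gm * c := Real.sq_sqrt hδpos.le
      nlinarith [norm_nonneg (k - A x), Real.sqrt_nonneg (4 * gp * gm * c)]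
    linarith
end

section
/- Let H, K be complex inner product spaces with dim H ≥ 2 and A : H → K a nonzero additive map with dense image preserving orthogonality. Then A preserves orthogonality in both directions: ⟨x|y⟩ = 0 if and only if ⟨A x|A y⟩ = 0. -/
open Complex


lemma lin_of_nonneg' (f : ℝ →+ ℝ) (h : ∀ s : ℝ, 0 ≤ s → 0 ≤ f s) (t : ℝ) :
    f t = t * f 1 := by
  have mono : ∀ a b : ℝ, a ≤ b → f a ≤ f b := by
    intro a b hab
    have h1 := h (b - a) (by linarith)
    have h2 : f (b - a) = f b - f a := by
      rw [AddMonoidHom.map_sub]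
    linarith
  have hq : ∀ q : ℚ, f (q : ℝ) = (q : ℝ) * f 1 := by
    intro q
    have := map_ratCast_smul f ℝ ℝ q (1 : ℝ)
    simpa [smul_eq_mul] using this
  have hf1 : 0 ≤ f 1 := h 1 zero_le_one
  have key : ∀ ε : ℝ, 0 < ε → |f t - t * f 1| ≤ ε * (2 * f 1) := by
    intro ε hε
    obtain ⟨δ, hδ0, hδε⟩ := exists_rat_btwn hε
    have hδ0' : (0:ℝ) < (δ:ℝ) := by exact_mod_cast hδ0
    obtain ⟨q, hq1⟩ := exists_rat_near t hδ0'
    have hlo : ((q - δ : ℚ) : ℝ) ≤ t := by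
      push_cast
      cases abs_lt.mp hq1 with
      | intro h1 h2 => linarith
    have hhi : t ≤ ((q + δ : ℚ) : ℝ) := by
      push_cast
      cases abs_lt.mp hq1 with
      | intro h1 h2 => linarith
    have h1 := mono _ _ hlo
    have h2 := mono _ _ hhi
    rw [hq (q - δ), hq (q + δ)] at *
    have hlo' : ((q - δ : ℚ) : ℝ) * f 1 ≤ t * f 1 := mul_le_mul_of_nonneg_right hlo hf1
    have hhi' : t * f 1 ≤ ((q + δ : ℚ) : ℝ) * f 1 := mul_le_mul_of_nonneg_right hhi hf1
    rw [abs_le]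
    push_cast at *
    constructor <;> nlinarith
  have : |f t - t * f 1| ≤ 0 := by
    refine le_of_forall_pos_le_add ?_
    intro ε hε
    rcases le_or_gt (f 1) 0 with h0 | h0
    · have hf10 : f 1 = 0 := le_antisymm h0 hf1
      have := key 1 zero_lt_one
      rw [hf10] at this ⊢
      simp only [mul_zero, sub_zero, one_mul] at this ⊢
      linarith
    · have := key (ε / (2 * f 1)) (by positivity)
      calc |f t - t * f 1| ≤ (ε / (2 * f 1)) * (2 * f 1) := this
        _ = ε := by field_simp
        _ ≤ 0 + ε := by linarith
  have := abs_nonneg (f t - t * f 1)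
  have h0 : |f t - t * f 1| = 0 := le_antisymm ‹_› this
  have := abs_eq_zero.mp h0
  linarith

lemma lin_of_bound' (f : ℝ →+ ℂ) (C : ℝ) (hb : ∀ t : ℝ, ‖f t‖ ≤ C * |t|) (t : ℝ) :
    f t = (t : ℂ) * f 1 := by
  have hq : ∀ q : ℚ, f (q : ℝ) = ((q : ℝ) : ℂ) * f 1 := by
    intro q
    have := map_ratCast_smul f ℝ ℂ q (1 : ℝ)
    simpa [smul_eq_mul] using this
  have key : ∀ ε : ℝ, 0 < ε → ‖f t - (t : ℂ) * f 1‖ < ε := by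
    intro ε hε
    set C' : ℝ := |C| + ‖f 1‖ + 1 with hC'
    have hC'pos : (0:ℝ) < C' := by positivity
    obtain ⟨q, hq1⟩ := exists_rat_near t (div_pos hε hC'pos)
    have hsplit : f t - (t : ℂ) * f 1 = f (t - q) + (((q : ℝ) : ℂ) - (t : ℂ)) * f 1 := by
      have : f t = f (t - q) + f (q : ℝ) := by
        rw [← AddMonoidHom.map_add]; ring_nf
      rw [this, hq q]; ring
    calc ‖f t - (t : ℂ) * f 1‖ ≤ ‖f (t - ↑q)‖ + ‖(((q : ℝ) : ℂ) - (t : ℂ)) * f 1‖ := by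
          rw [hsplit]; exact norm_add_le _ _
      _ ≤ C * |t - ↑q| + |t - ↑q| * ‖f 1‖ := by
          gcongr
          · exact hb _
          · rw [norm_mul]
            gcongr
            rw [← Complex.ofReal_sub]
            rw [Complex.norm_real]
            rw [Real.norm_eq_abs, abs_sub_comm]
      _ ≤ C' * |t - ↑q| := by
          have : C ≤ |C| := le_abs_self C
          nlinarith [abs_nonneg (t - (q:ℝ)), norm_nonneg (f 1)]
      _ < C' * (ε / C') := by
          exact mul_lt_mul_of_pos_left hq1 hC'pos
      _ = ε := by field_simp
  by_contra hne
  have h0 : 0 < ‖f t - (t : ℂ) * f 1‖ := by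
    rw [norm_pos_iff, sub_ne_zero]
    exact fun h => hne h
  exact lt_irrefl _ (key _ h0)

lemma exists_ortho {H : Type*} [NormedAddCommGroup H] [InnerProductSpace ℂ H]
    (hdim : 2 ≤ Module.rank ℂ H) (x : H) (hx : ‖x‖ = 1) :
    ∃ z : H, ‖z‖ = 1 ∧ (inner ℂ x z : ℂ) = 0 := by
  have hxx : (inner ℂ x x : ℂ) = 1 := by
    rw [inner_self_eq_norm_sq_to_K, hx]; norm_num
  have hspan : Submodule.span ℂ ({x} : Set H) ≠ ⊤ := by
    intro hsp
    have h1 : Module.rank ℂ H ≤ 1 := by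
      have h2 := rank_span_le (R := ℂ) ({x} : Set H)
      rw [← rank_top ℂ H, ← hsp]
      simpa using h2
    have : (2 : Cardinal) ≤ 1 := le_trans hdim h1
    norm_num at this
  obtain ⟨w, hw⟩ : ∃ w : H, w ∉ Submodule.span ℂ ({x} : Set H) := by
    by_contra hc
    push_neg at hc
    exact hspan (Submodule.eq_top_iff'.mpr hc)
  set z₀ : H := w - (inner ℂ x w : ℂ) • x with hz₀
  have hz₀ne : z₀ ≠ 0 := by
    intro h
    apply hw
    have h2 := sub_eq_zero.mp h
    exact Submodule.mem_span_singleton.mpr ⟨(inner ℂ x w : ℂ), h2.symm⟩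
  have hinner : (inner ℂ x z₀ : ℂ) = 0 := by
    rw [hz₀, inner_sub_right, inner_smul_right, hxx]
    ring
  refine ⟨((‖z₀‖⁻¹ : ℝ) : ℂ) • z₀, ?_, ?_⟩
  · rw [norm_smul]
    simp [norm_ne_zero_iff.mpr hz₀ne]
  · rw [inner_smul_right, hinner]
    simp

section
variable {H K : Type*} [NormedAddCommGroup H] [InnerProductSpace ℂ H]
    [NormedAddCommGroup K] [InnerProductSpace ℂ K]

lemma big (hdim : 2 ≤ Module.rank ℂ H)
    (A : H → K)
    (hadd : ∀ x y, A (x + y) = A x + A y)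
    (horth : ∀ x y : H, (inner ℂ x y : ℂ) = 0 → (inner ℂ (A x) (A y) : ℂ) = 0)
    (x : H) (hx : ‖x‖ = 1) (l : ℂ) (y : H) :
    (inner ℂ (A (l • x)) (A y) : ℂ) =
      (((l * (inner ℂ y x : ℂ)).re : ℝ) : ℂ) * ((‖A x‖ ^ 2 : ℝ) : ℂ)
        + (((l * (inner ℂ y x : ℂ)).im : ℝ) : ℂ) * (inner ℂ (A (I • x)) (A x) : ℂ) := by
  -- basic facts about A
  have h0 : A 0 = 0 := by
    have h00 : A 0 + A 0 = A 0 := by rw [← hadd]; norm_num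
    exact add_eq_right.mp h00
  have hneg : ∀ v : H, A (-v) = -A v := by
    intro v
    have h1 : A v + A (-v) = 0 := by rw [← hadd]; simp [h0]
    exact eq_neg_of_add_eq_zero_right h1
  have hxx : (inner ℂ x x : ℂ) = 1 := by
    rw [inner_self_eq_norm_sq_to_K, hx]; norm_num
  obtain ⟨z, hz1, hxz⟩ := exists_ortho hdim x hx
  have hzz : (inner ℂ z z : ℂ) = 1 := by
    rw [inner_self_eq_norm_sq_to_K, hz1]; norm_num
  have hzx : (inner ℂ z x : ℂ) = 0 := by
    rw [← inner_conj_symm, hxz, map_zero]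
  -- the four-term expansion
  have expand4 : ∀ u1 u2 v1 v2 : H, (inner ℂ (u1 + u2) (v1 + v2) : ℂ) = 0 →
      (inner ℂ u1 v2 : ℂ) = 0 → (inner ℂ u2 v1 : ℂ) = 0 →
      (inner ℂ (A u1) (A v1) : ℂ) = -(inner ℂ (A u2) (A v2) : ℂ) := by
    intro u1 u2 v1 v2 hall hc1 hc2
    have h1 := horth _ _ hall
    rw [hadd, hadd, inner_add_left, inner_add_right, inner_add_right,
      horth _ _ hc1, horth _ _ hc2] at h1
    linear_combination h1
  -- R1 : k_x l (conj m * c) = k_z m (conj l * c)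
  have hR1 : ∀ w w' : H, ‖w‖ = 1 → ‖w'‖ = 1 → (inner ℂ w w' : ℂ) = 0 →
      ∀ l m c : ℂ, (inner ℂ (A (l • w)) (A ((starRingEnd ℂ m * c) • w)) : ℂ)
        = (inner ℂ (A (m • w')) (A ((starRingEnd ℂ l * c) • w')) : ℂ) := by
    intro w w' hw hw' hww' l m c
    have hww : (inner ℂ w w : ℂ) = 1 := by
      rw [inner_self_eq_norm_sq_to_K, hw]; norm_num
    have hw'w' : (inner ℂ w' w' : ℂ) = 1 := by
      rw [inner_self_eq_norm_sq_to_K, hw']; norm_num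
    have hw'w : (inner ℂ w' w : ℂ) = 0 := by
      rw [← inner_conj_symm, hww', map_zero]
    have h1 : (inner ℂ (A (l • w)) (A ((starRingEnd ℂ m * c) • w)) : ℂ)
        = -(inner ℂ (A (m • w')) (A ((-(starRingEnd ℂ l * c)) • w')) : ℂ) := by
      apply expand4
      · simp only [inner_add_left, inner_add_right, inner_smul_left, inner_smul_right,
          hww, hw'w', hww', hw'w]
        ring
      · simp [inner_smul_left, inner_smul_right, hww']
      · simp [inner_smul_left, inner_smul_right, hw'w]
    rw [h1, neg_smul, hneg, inner_neg_right, neg_neg]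
  -- the key reduction: T (l•x) (m•x) = F (l * conj m) where F w = T (w•x) x
  have hk : ∀ l m : ℂ, (inner ℂ (A (l • x)) (A (m • x)) : ℂ)
      = (inner ℂ (A ((l * starRingEnd ℂ m) • x)) (A x) : ℂ) := by
    have chain : ∀ l μ c : ℂ, (inner ℂ (A (l • x)) (A ((starRingEnd ℂ μ * c) • x)) : ℂ)
        = (inner ℂ (A ((l * starRingEnd ℂ c) • x)) (A ((starRingEnd ℂ μ) • x)) : ℂ) := by
      intro l μ c
      rw [hR1 x z hx hz1 hxz l μ c]
      have h2 := hR1 z x hz1 hx hzx μ (l * starRingEnd ℂ c) 1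
      simp only [map_mul, RingHomCompTriple.comp_apply, RingHom.id_apply, mul_one] at h2
      exact h2
    intro l m
    have h3 := chain l 1 m
    simpa using h3

  -- F as an additive hom
  set c0 : ℝ := ‖A x‖ ^ 2 with hc0
  have Fadd : ∀ a b : ℂ, (inner ℂ (A ((a + b) • x)) (A x) : ℂ)
      = inner ℂ (A (a • x)) (A x) + inner ℂ (A (b • x)) (A x) := by
    intro a b
    rw [add_smul, hadd, inner_add_left]
  set F : ℂ →+ ℂ := AddMonoidHom.mk' (fun w => (inner ℂ (A (w • x)) (A x) : ℂ)) Fadd with hFdef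
  have hFap : ∀ w : ℂ, F w = (inner ℂ (A (w • x)) (A x) : ℂ) := fun w => rfl
  have hkF : ∀ l m : ℂ, (inner ℂ (A (l • x)) (A (m • x)) : ℂ) = F (l * starRingEnd ℂ m) := by
    intro l m; rw [hFap]; exact hk l m
  -- F on nonneg reals is a nonneg real
  have hs : ∀ s : ℝ, 0 ≤ s →
      F ((s : ℝ) : ℂ) = ((‖A (((Real.sqrt s : ℝ) : ℂ) • x)‖ ^ 2 : ℝ) : ℂ) := by
    intro s hs0
    have h1 := hkF ((Real.sqrt s : ℝ) : ℂ) ((Real.sqrt s : ℝ) : ℂ)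
    rw [inner_self_eq_norm_sq_to_K, Complex.conj_ofReal, ← Complex.ofReal_mul,
      Real.mul_self_sqrt hs0] at h1
    rw [← h1]
    push_cast
    rfl
  have hF1 : F ((1 : ℝ) : ℂ) = ((c0 : ℝ) : ℂ) := by
    rw [hFap]
    norm_num
    rw [hc0]
    norm_cast
  -- F is real-linear on the real axis
  have hrealF : ∀ t : ℝ, F ((t : ℝ) : ℂ) = ((t : ℝ) : ℂ) * ((c0 : ℝ) : ℂ) := by
    have hcast : ∀ a b : ℝ, ((a + b : ℝ) : ℂ) = ((a : ℝ) : ℂ) + ((b : ℝ) : ℂ) := by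
      intro a b; push_cast; ring
    set fre : ℝ →+ ℝ := AddMonoidHom.mk' (fun t => (F ((t : ℝ) : ℂ)).re)
      (by intro a b; simp only [hcast, map_add, Complex.add_re]) with hfre
    set fim : ℝ →+ ℝ := AddMonoidHom.mk' (fun t => (F ((t : ℝ) : ℂ)).im)
      (by intro a b; simp only [hcast, map_add, Complex.add_im]) with hfim
    have hre := fun t => lin_of_nonneg' fre
      (fun s hs0 => by
        simp only [hfre, AddMonoidHom.mk'_apply, hs s hs0, Complex.ofReal_re]
        positivity) t
    have him := fun t => lin_of_nonneg' fim
      (fun s hs0 => by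
        simp only [hfim, AddMonoidHom.mk'_apply, hs s hs0, Complex.ofReal_im, le_refl]) t
    intro t
    have h1 := hre t
    have h2 := him t
    simp only [hfre, hfim, AddMonoidHom.mk'_apply, hF1, Complex.ofReal_re,
      Complex.ofReal_im, mul_zero] at h1 h2
    apply Complex.ext
    · rw [h1, ← Complex.ofReal_mul, Complex.ofReal_re]
    · rw [h2, ← Complex.ofReal_mul, Complex.ofReal_im]
  -- norm of A on the line
  have hnormw : ∀ w : ℂ, ‖A (w • x)‖ = ‖w‖ * ‖A x‖ := by
    intro w
    have h1 := hkF w w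
    rw [inner_self_eq_norm_sq_to_K, Complex.mul_conj, hrealF (normSq w)] at h1
    have h2 : (‖A (w • x)‖ ^ 2 : ℝ) = normSq w * c0 := by
      apply Complex.ofReal_injective
      push_cast
      exact h1
    have h3 : (‖w‖ * ‖A x‖) ^ 2 = normSq w * c0 := by
      rw [mul_pow, hc0, Complex.sq_norm]
    rw [← Real.sqrt_sq (norm_nonneg (A (w • x))), h2, ← h3,
      Real.sqrt_sq (by positivity)]
  -- bound on F
  have hbound : ∀ w : ℂ, ‖F w‖ ≤ c0 * ‖w‖ := by
    intro w
    rw [hFap]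
    calc ‖(inner ℂ (A (w • x)) (A x) : ℂ)‖ ≤ ‖A (w • x)‖ * ‖A x‖ := norm_inner_le_norm _ _
      _ = ‖w‖ * ‖A x‖ * ‖A x‖ := by rw [hnormw]
      _ = c0 * ‖w‖ := by rw [hc0]; ring
  -- F on the imaginary axis
  have hIax : ∀ t : ℝ, F (I * ((t : ℝ) : ℂ)) = ((t : ℝ) : ℂ) * F I := by
    set g : ℝ →+ ℂ := AddMonoidHom.mk' (fun t => F (I * ((t : ℝ) : ℂ)))
      (by
        intro a b
        simp only [Complex.ofReal_add, mul_add, map_add]) with hg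
    have hgb : ∀ t : ℝ, ‖g t‖ ≤ c0 * |t| := by
      intro t
      simp only [hg, AddMonoidHom.mk'_apply]
      calc ‖F (I * ((t : ℝ) : ℂ))‖ ≤ c0 * ‖I * ((t : ℝ) : ℂ)‖ := hbound _
        _ = c0 * |t| := by rw [norm_mul, Complex.norm_I, Complex.norm_real,
            Real.norm_eq_abs, one_mul]
    intro t
    have h1 := lin_of_bound' g c0 hgb t
    simp only [hg, AddMonoidHom.mk'_apply, Complex.ofReal_one, mul_one] at h1
    exact h1
  -- decomposition of F
  have hdecomp : ∀ w : ℂ, F w = ((w.re : ℝ) : ℂ) * ((c0 : ℝ) : ℂ)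
      + ((w.im : ℝ) : ℂ) * F I := by
    intro w
    conv_lhs => rw [← Complex.re_add_im w]
    rw [map_add, hrealF w.re, show ((w.im : ℝ) : ℂ) * I = I * ((w.im : ℝ) : ℂ) by ring,
      hIax w.im]
  -- final assembly
  set m : ℂ := (inner ℂ x y : ℂ) with hm
  have hQ : (inner ℂ x (y - m • x) : ℂ) = 0 := by
    rw [inner_sub_right, inner_smul_right, hxx, mul_one, hm, sub_self]
  have hyd : A y = A (m • x) + A (y - m • x) := by
    rw [← hadd]
    congr 1
    abel
  have hcross : (inner ℂ (A (l • x)) (A (y - m • x)) : ℂ) = 0 := by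
    apply horth
    rw [inner_smul_left, hQ, mul_zero]
  have hmain : (inner ℂ (A (l • x)) (A y) : ℂ) = F (l * starRingEnd ℂ m) := by
    rw [hyd, inner_add_right, hkF, hcross, add_zero]
  have hconj : starRingEnd ℂ m = (inner ℂ y x : ℂ) := by
    rw [hm, inner_conj_symm]
  rw [hmain, hdecomp, hconj, hFap I]



lemma connect (hdim : 2 ≤ Module.rank ℂ H)
    (A : H → K)
    (hadd : ∀ x y, A (x + y) = A x + A y)
    (horth : ∀ x y : H, (inner ℂ x y : ℂ) = 0 → (inner ℂ (A x) (A y) : ℂ) = 0)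
    (x y : H) (hx : ‖x‖ = 1) (hy : ‖y‖ = 1) (hne : (inner ℂ x y : ℂ) ≠ 0) :
    (‖A x‖ ^ 2 : ℝ) = ‖A y‖ ^ 2 ∧
      (inner ℂ (A (I • x)) (A x) : ℂ) = (inner ℂ (A (I • y)) (A y) : ℂ) := by
  have hskew : ∀ w : H, ‖w‖ = 1 → (starRingEnd ℂ) (inner ℂ (A (I • w)) (A w) : ℂ)
      = -(inner ℂ (A (I • w)) (A w) : ℂ) := by
    intro w hw
    have h1 := big hdim A hadd horth w hw 1 (I • w)
    have hww : (inner ℂ w w : ℂ) = 1 := by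
      rw [inner_self_eq_norm_sq_to_K, hw]; norm_num
    rw [one_smul] at h1
    rw [show (inner ℂ (I • w) w : ℂ) = -I by
      rw [inner_smul_left, hww, mul_one]; simp] at h1
    rw [← inner_conj_symm] at h1
    simpa using h1
  have hsx : (starRingEnd ℂ) (inner ℂ (A (I • x)) (A x) : ℂ)
      = -(inner ℂ (A (I • x)) (A x) : ℂ) := hskew x hx
  have hsy : (starRingEnd ℂ) (inner ℂ (A (I • y)) (A y) : ℂ)
      = -(inner ℂ (A (I • y)) (A y) : ℂ) := hskew y hy
  have hdxre : (inner ℂ (A (I • x)) (A x) : ℂ).re = 0 := by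
    have h := congrArg Complex.re hsx
    simp only [Complex.conj_re, Complex.neg_re] at h
    linarith
  have hdyre : (inner ℂ (A (I • y)) (A y) : ℂ).re = 0 := by
    have h := congrArg Complex.re hsy
    simp only [Complex.conj_re, Complex.neg_re] at h
    linarith
  have hyx : (inner ℂ y x : ℂ) = (starRingEnd ℂ) (inner ℂ x y : ℂ) := by
    rw [inner_conj_symm]
  have hyxre : (inner ℂ y x : ℂ).re = (inner ℂ x y : ℂ).re := by rw [hyx, Complex.conj_re]
  have hyxim : (inner ℂ y x : ℂ).im = -(inner ℂ x y : ℂ).im := by rw [hyx, Complex.conj_im]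
  have hfoldx : ((‖A x‖ : ℝ) : ℂ) ^ 2 = ((‖A x‖ ^ 2 : ℝ) : ℂ) := by push_cast; ring
  have hfoldy : ((‖A y‖ : ℝ) : ℂ) ^ 2 = ((‖A y‖ ^ 2 : ℝ) : ℂ) := by push_cast; ring
  -- equation A
  have hEA : ((inner ℂ x y : ℂ).re : ℂ) * ((‖A x‖ ^ 2 : ℝ) : ℂ)
        - ((inner ℂ x y : ℂ).im : ℂ) * (inner ℂ (A (I • x)) (A x) : ℂ)
      = ((inner ℂ x y : ℂ).re : ℂ) * ((‖A y‖ ^ 2 : ℝ) : ℂ)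
        - ((inner ℂ x y : ℂ).im : ℂ) * (inner ℂ (A (I • y)) (A y) : ℂ) := by
    have h1 := big hdim A hadd horth x hx 1 y
    rw [one_smul, one_mul, hyxre, hyxim] at h1
    have h2 := big hdim A hadd horth y hy 1 x
    rw [one_smul, one_mul] at h2
    have h3 : (inner ℂ (A x) (A y) : ℂ)
        = (starRingEnd ℂ) ((inner ℂ (A y) (A x) : ℂ)) := by rw [inner_conj_symm]
    rw [h2] at h3
    simp only [map_add, map_mul, Complex.conj_ofReal, hsy] at h3
    rw [h3] at h1
    push_cast at h1
    rw [hfoldx, hfoldy] at h1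
    linear_combination -h1
  -- equation B
  have hEB : -((inner ℂ x y : ℂ).im : ℂ) * ((‖A x‖ ^ 2 : ℝ) : ℂ)
        - ((inner ℂ x y : ℂ).re : ℂ) * (inner ℂ (A (I • x)) (A x) : ℂ)
      = -((inner ℂ x y : ℂ).im : ℂ) * ((‖A y‖ ^ 2 : ℝ) : ℂ)
        - ((inner ℂ x y : ℂ).re : ℂ) * (inner ℂ (A (I • y)) (A y) : ℂ) := by
    have h1 := big hdim A hadd horth x hx 1 (I • y)
    rw [one_smul, one_mul] at h1
    have hre : (inner ℂ (I • y) x : ℂ).re = -(inner ℂ x y : ℂ).im := by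
      rw [inner_smul_left, hyx]
      simp [Complex.mul_re, hyxre, hyxim]
    have him : (inner ℂ (I • y) x : ℂ).im = -(inner ℂ x y : ℂ).re := by
      rw [inner_smul_left, hyx]
      simp [Complex.mul_im, hyxre, hyxim]
    rw [hre, him] at h1
    have h2 := big hdim A hadd horth y hy I x
    have hre2 : (I * (inner ℂ x y : ℂ)).re = -(inner ℂ x y : ℂ).im := by
      simp [Complex.mul_re]
    have him2 : (I * (inner ℂ x y : ℂ)).im = (inner ℂ x y : ℂ).re := by
      simp [Complex.mul_im]
    rw [hre2, him2] at h2
    have h3 : (inner ℂ (A x) (A (I • y)) : ℂ)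
        = (starRingEnd ℂ) ((inner ℂ (A (I • y)) (A x) : ℂ)) := by rw [inner_conj_symm]
    rw [h2] at h3
    simp only [map_add, map_mul, map_neg, Complex.conj_ofReal, hsy] at h3
    rw [h3] at h1
    push_cast at h1
    rw [hfoldx, hfoldy] at h1
    linear_combination -h1
  -- extract real equations
  have e1 : (inner ℂ x y : ℂ).re * (‖A x‖ ^ 2) = (inner ℂ x y : ℂ).re * (‖A y‖ ^ 2) := by
    have h := congrArg Complex.re hEA
    simp only [Complex.sub_re, Complex.mul_re, Complex.ofReal_re, Complex.ofReal_im,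
      hdxre, hdyre, zero_mul, mul_zero, sub_zero] at h
    linarith
  have e2 : (inner ℂ x y : ℂ).im * (inner ℂ (A (I • x)) (A x) : ℂ).im
      = (inner ℂ x y : ℂ).im * (inner ℂ (A (I • y)) (A y) : ℂ).im := by
    have h := congrArg Complex.im hEA
    simp only [Complex.sub_im, Complex.mul_im, Complex.ofReal_re, Complex.ofReal_im,
      hdxre, hdyre, zero_mul, mul_zero, add_zero, zero_add, sub_zero] at h
    linarith
  have e3 : (inner ℂ x y : ℂ).im * (‖A x‖ ^ 2) = (inner ℂ x y : ℂ).im * (‖A y‖ ^ 2) := by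
    have h := congrArg Complex.re hEB
    simp only [Complex.sub_re, Complex.neg_re, Complex.mul_re, Complex.ofReal_re,
      Complex.ofReal_im, hdxre, hdyre, zero_mul, mul_zero, sub_zero, neg_zero] at h
    linarith
  have e4 : (inner ℂ x y : ℂ).re * (inner ℂ (A (I • x)) (A x) : ℂ).im
      = (inner ℂ x y : ℂ).re * (inner ℂ (A (I • y)) (A y) : ℂ).im := by
    have h := congrArg Complex.im hEB
    simp only [Complex.sub_im, Complex.neg_im, Complex.mul_im, Complex.ofReal_re,
      Complex.ofReal_im, hdxre, hdyre, zero_mul, mul_zero, add_zero, zero_add,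
      neg_zero, sub_zero] at h
    linarith
  have hab : (inner ℂ x y : ℂ).re ^ 2 + (inner ℂ x y : ℂ).im ^ 2 ≠ 0 := by
    intro h
    apply hne
    have ha0 : (inner ℂ x y : ℂ).re = 0 := by nlinarith [sq_nonneg (inner ℂ x y : ℂ).re, sq_nonneg (inner ℂ x y : ℂ).im]
    have hb0 : (inner ℂ x y : ℂ).im = 0 := by nlinarith [sq_nonneg (inner ℂ x y : ℂ).re, sq_nonneg (inner ℂ x y : ℂ).im]
    apply Complex.ext <;> simp [ha0, hb0]
  constructor
  · have h : ((inner ℂ x y : ℂ).re ^ 2 + (inner ℂ x y : ℂ).im ^ 2) * (‖A x‖ ^ 2)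
        = ((inner ℂ x y : ℂ).re ^ 2 + (inner ℂ x y : ℂ).im ^ 2) * (‖A y‖ ^ 2) := by
      linear_combination (inner ℂ x y : ℂ).re * e1 + (inner ℂ x y : ℂ).im * e3
    exact mul_left_cancel₀ hab h
  · have him : (inner ℂ (A (I • x)) (A x) : ℂ).im = (inner ℂ (A (I • y)) (A y) : ℂ).im := by
      have h : ((inner ℂ x y : ℂ).re ^ 2 + (inner ℂ x y : ℂ).im ^ 2) * (inner ℂ (A (I • x)) (A x) : ℂ).im
          = ((inner ℂ x y : ℂ).re ^ 2 + (inner ℂ x y : ℂ).im ^ 2) * (inner ℂ (A (I • y)) (A y) : ℂ).im := by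
        linear_combination (inner ℂ x y : ℂ).re * e4 + (inner ℂ x y : ℂ).im * e2
      exact mul_left_cancel₀ hab h
    apply Complex.ext
    · rw [hdxre, hdyre]
    · exact him

end

theorem stmt_8 {H K : Type*} [NormedAddCommGroup H] [InnerProductSpace ℂ H]
    [NormedAddCommGroup K] [InnerProductSpace ℂ K]
    (hdim : 2 ≤ Module.rank ℂ H)
    (A : H → K) (hA : A ≠ 0)
    (hadd : ∀ x y, A (x + y) = A x + A y)
    (hdense : DenseRange A)
    (horth : ∀ x y : H, (inner ℂ x y : ℂ) = 0 → (inner ℂ (A x) (A y) : ℂ) = 0) :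
    ∀ x y : H, (inner ℂ x y : ℂ) = 0 ↔ (inner ℂ (A x) (A y) : ℂ) = 0 := by
  have h0 : A 0 = 0 := by
    have h00 : A 0 + A 0 = A 0 := by rw [← hadd]; norm_num
    exact add_eq_right.mp h00
  -- a unit vector e
  have hnt : Nontrivial H := by
    rw [← rank_pos_iff_nontrivial (R := ℂ)]
    calc (0 : Cardinal) < 2 := by norm_num
      _ ≤ _ := hdim
  obtain ⟨v, hv⟩ := exists_ne (0 : H)
  set e : H := ((‖v‖⁻¹ : ℝ) : ℂ) • v with he
  have hee : ‖e‖ = 1 := by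
    rw [he, norm_smul, Complex.norm_real, norm_inv, norm_norm,
      inv_mul_cancel₀ (norm_ne_zero_iff.mpr hv)]
  have heinner : (inner ℂ e e : ℂ) = 1 := by
    rw [inner_self_eq_norm_sq_to_K, hee]; norm_num
  -- constancy across all unit vectors
  have hconn : ∀ x y : H, ‖x‖ = 1 → ‖y‖ = 1 →
      (‖A x‖ ^ 2 : ℝ) = ‖A y‖ ^ 2 ∧
        (inner ℂ (A (I • x)) (A x) : ℂ) = (inner ℂ (A (I • y)) (A y) : ℂ) := by
    intro x y hx hy
    by_cases hxy : (inner ℂ x y : ℂ) = 0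
    · have hxx : (inner ℂ x x : ℂ) = 1 := by
        rw [inner_self_eq_norm_sq_to_K, hx]; norm_num
      have hyy : (inner ℂ y y : ℂ) = 1 := by
        rw [inner_self_eq_norm_sq_to_K, hy]; norm_num
      have hne : x + y ≠ 0 := by
        intro h
        have h2 : y = -x := by
          rw [← neg_eq_of_add_eq_zero_right h]
        rw [h2, inner_neg_right, hxx] at hxy
        norm_num at hxy
      have hinvR : (‖x + y‖⁻¹ : ℝ) ≠ 0 := inv_ne_zero (norm_ne_zero_iff.mpr hne)
      have hinv0 : ((‖x + y‖⁻¹ : ℝ) : ℂ) ≠ 0 := by exact_mod_cast hinvR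
      set u : H := ((‖x + y‖⁻¹ : ℝ) : ℂ) • (x + y) with hu
      have hu1 : ‖u‖ = 1 := by
        rw [hu, norm_smul, Complex.norm_real, norm_inv, norm_norm,
          inv_mul_cancel₀ (norm_ne_zero_iff.mpr hne)]
      have hxu : (inner ℂ x u : ℂ) ≠ 0 := by
        rw [hu, inner_smul_right, inner_add_right, hxx, hxy, add_zero, mul_one]
        exact hinv0
      have huy : (inner ℂ u y : ℂ) ≠ 0 := by
        rw [hu, inner_smul_left, inner_add_left, hyy, hxy, zero_add, mul_one,
          Complex.conj_ofReal]
        exact hinv0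
      obtain ⟨c1, d1⟩ := connect hdim A hadd horth x u hx hu1 hxu
      obtain ⟨c2, d2⟩ := connect hdim A hadd horth u y hu1 hy huy
      exact ⟨c1.trans c2, d1.trans d2⟩
    · exact connect hdim A hadd horth x y hx hy hxy
  -- global formula
  have hglobal : ∀ x y : H, (inner ℂ (A x) (A y) : ℂ) =
      ((inner ℂ y x : ℂ).re : ℂ) * ((‖A e‖ ^ 2 : ℝ) : ℂ)
        + ((inner ℂ y x : ℂ).im : ℂ) * (inner ℂ (A (I • e)) (A e) : ℂ) := by
    intro x y
    by_cases hx0 : x = 0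
    · rw [hx0, h0]
      simp
    · set xh : H := ((‖x‖⁻¹ : ℝ) : ℂ) • x with hxh
      have hxh1 : ‖xh‖ = 1 := by
        rw [hxh, norm_smul, Complex.norm_real, norm_inv, norm_norm,
          inv_mul_cancel₀ (norm_ne_zero_iff.mpr hx0)]
      have hxrw : x = ((‖x‖ : ℝ) : ℂ) • xh := by
        rw [hxh, smul_smul, ← Complex.ofReal_mul,
          mul_inv_cancel₀ (norm_ne_zero_iff.mpr hx0)]
        simp
      have h1 := big hdim A hadd horth xh hxh1 ((‖x‖ : ℝ) : ℂ) y
      rw [← hxrw] at h1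
      have hco : ((‖x‖ : ℝ) : ℂ) * (inner ℂ y xh : ℂ) = (inner ℂ y x : ℂ) := by
        rw [hxh, inner_smul_right, ← mul_assoc, ← Complex.ofReal_mul,
          mul_inv_cancel₀ (norm_ne_zero_iff.mpr hx0), Complex.ofReal_one, one_mul]
      rw [hco] at h1
      obtain ⟨hc, hd⟩ := hconn xh e hxh1 hee
      rw [h1, hc, hd]
  -- positivity of the constant
  obtain ⟨x0, hx0⟩ : ∃ x0, A x0 ≠ 0 := by
    by_contra hc
    push_neg at hc
    exact hA (funext fun t => by rw [hc t]; rfl)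
  have hx0ne : x0 ≠ 0 := fun h => hx0 (by rw [h, h0])
  have hxx0 : (inner ℂ x0 x0 : ℂ) = ((‖x0‖ ^ 2 : ℝ) : ℂ) := by
    rw [inner_self_eq_norm_sq_to_K]; push_cast; rfl
  have hAxx : (inner ℂ (A x0) (A x0) : ℂ) = ((‖A x0‖ ^ 2 : ℝ) : ℂ) := by
    rw [inner_self_eq_norm_sq_to_K]; push_cast; rfl
  have hP : (inner ℂ (A x0) (A x0) : ℂ) = ((‖x0‖ ^ 2 * ‖A e‖ ^ 2 : ℝ) : ℂ) := by
    rw [hglobal x0 x0, hxx0]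
    simp only [Complex.ofReal_re, Complex.ofReal_im, Complex.ofReal_zero, zero_mul,
      add_zero]
    push_cast
    ring
  have hkeyR : (‖A x0‖ ^ 2 : ℝ) = ‖x0‖ ^ 2 * ‖A e‖ ^ 2 :=
    Complex.ofReal_injective (hAxx.symm.trans hP)
  have hAx0pos : (0 : ℝ) < ‖A x0‖ ^ 2 := pow_pos (norm_pos_iff.mpr hx0) 2
  have hx0normpos : (0 : ℝ) < ‖x0‖ ^ 2 := pow_pos (norm_pos_iff.mpr hx0ne) 2
  have hce : (0 : ℝ) < ‖A e‖ ^ 2 := by nlinarith [sq_nonneg ‖A e‖]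
  -- the imaginary constant is nonzero
  have hdre : (inner ℂ (A (I • e)) (A e) : ℂ).re = 0 := by
    have h1 := hglobal e (I • e)
    have h2 : (inner ℂ (I • e) e : ℂ) = -I := by
      rw [inner_smul_left, heinner, mul_one]; simp
    rw [h2] at h1
    have h3 : (inner ℂ (A e) (A (I • e)) : ℂ)
        = (starRingEnd ℂ) ((inner ℂ (A (I • e)) (A e) : ℂ)) := by rw [inner_conj_symm]
    rw [h3] at h1
    have h4 := congrArg Complex.re h1
    simp only [Complex.conj_re, Complex.neg_re, Complex.add_re, Complex.mul_re,
      Complex.ofReal_re, Complex.ofReal_im, Complex.neg_im, Complex.I_re,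
      Complex.I_im] at h4
    linarith
  have hdim0 : (inner ℂ (A (I • e)) (A e) : ℂ).im ≠ 0 := by
    intro him0
    have hd0 : (inner ℂ (A (I • e)) (A e) : ℂ) = 0 := by
      apply Complex.ext
      · rw [hdre]; rfl
      · rw [him0]; rfl
    have hcont : Continuous fun k : K => ((inner ℂ (A x0) k : ℂ)).im :=
      Complex.continuous_im.comp (continuous_const.inner continuous_id)
    have hzero : Set.EqOn (fun k : K => ((inner ℂ (A x0) k : ℂ)).im)
        (fun _ => (0 : ℝ)) (Set.range A) := by
      rintro _ ⟨w, rfl⟩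
      simp only
      rw [hglobal x0 w, hd0, mul_zero, add_zero, ← Complex.ofReal_mul, Complex.ofReal_im]
    have heq : (fun k : K => ((inner ℂ (A x0) k : ℂ)).im) = fun _ => 0 :=
      Continuous.ext_on hdense hcont continuous_const hzero
    have hev := congrFun heq (I • A x0)
    simp only [inner_smul_right] at hev
    rw [hP] at hev
    rw [show (I * ((‖x0‖ ^ 2 * ‖A e‖ ^ 2 : ℝ) : ℂ)).im = ‖x0‖ ^ 2 * ‖A e‖ ^ 2 by
      rw [Complex.mul_im, Complex.ofReal_re, Complex.ofReal_im, Complex.I_re,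
        Complex.I_im]; ring] at hev
    exact absurd hev (ne_of_gt (mul_pos hx0normpos hce))
  -- conclusion
  intro x y
  constructor
  · exact horth x y
  · intro hAxy
    have h := hglobal x y
    rw [hAxy] at h
    have hre := congrArg Complex.re h
    have him := congrArg Complex.im h
    simp only [Complex.zero_re, Complex.zero_im, Complex.add_re, Complex.add_im,
      Complex.mul_re, Complex.mul_im, Complex.ofReal_re, Complex.ofReal_im,
      hdre, zero_mul, mul_zero, add_zero, zero_add, sub_zero] at hre him
    have hb : (inner ℂ y x : ℂ).im = 0 := by
      rcases mul_eq_zero.mp him.symm with h1 | h1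
      · exact h1
      · exact absurd h1 hdim0
    have ha : (inner ℂ y x : ℂ).re = 0 := by
      rcases mul_eq_zero.mp hre.symm with h1 | h1
      · exact h1
      · exact absurd h1 (ne_of_gt hce)
    have hyx0 : (inner ℂ y x : ℂ) = 0 := by
      apply Complex.ext
      · rw [ha]; rfl
      · rw [hb]; rfl
    rw [← inner_conj_symm, hyx0, map_zero]
end

section
/- Let X be a complex normed space and τ : X → X a conjugation (a period-2 conjugate-linear isometry). Let X^τ = {x ∈ X : τ(x) = x}. Then for x, y ∈ X^τ, x is Birkhoff orthogonal to y in the real normed space X^τ if and only if x is Birkhoff orthogonal to y in X. -/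
theorem stmt_10 {X : Type*} [NormedAddCommGroup X] [NormedSpace ℂ X]
    (τ : X → X)
    (hadd : ∀ x y, τ (x + y) = τ x + τ y)
    (hconj : ∀ (c : ℂ) (x : X), τ (c • x) = (starRingEnd ℂ c) • τ x)
    (hiso : ∀ x, ‖τ x‖ = ‖x‖)
    (hinv : ∀ x, τ (τ x) = x)
    (x y : X) (hx : τ x = x) (hy : τ y = y) :
    (∀ t : ℝ, ‖x‖ ≤ ‖x + t • y‖) ↔ (∀ α : ℂ, ‖x‖ ≤ ‖x + α • y‖) := by
  constructor
  · intro h α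
    have hnorm : ‖x + (starRingEnd ℂ α) • y‖ = ‖x + α • y‖ := by
      rw [← hiso (x + α • y), hadd, hconj, hx, hy]
    have hre : x + (α.re : ℝ) • y =
        (1/2 : ℝ) • ((x + α • y) + (x + (starRingEnd ℂ α) • y)) := by
      have hsum : (α : ℂ) + starRingEnd ℂ α = (2 * α.re : ℝ) := by
        rw [Complex.add_conj]
      have : (x + α • y) + (x + (starRingEnd ℂ α) • y)
          = (2 : ℝ) • (x + (α.re : ℝ) • y) := by
        have h1 : α • y + (starRingEnd ℂ α) • y = ((2 * α.re : ℝ) : ℂ) • y := by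
          rw [← add_smul, hsum]
        have h2 : ((2 * α.re : ℝ) : ℂ) • y = (2 * α.re : ℝ) • y := by
          exact Complex.coe_smul _ _
        rw [smul_add, smul_smul]
        rw [add_add_add_comm, h1, h2, ← two_smul ℝ x, mul_smul]
      rw [this, smul_smul]
      norm_num
    calc ‖x‖ ≤ ‖x + (α.re : ℝ) • y‖ := h α.re
      _ = (1/2 : ℝ) * ‖(x + α • y) + (x + (starRingEnd ℂ α) • y)‖ := by
          rw [hre, norm_smul]; norm_num
      _ ≤ (1/2 : ℝ) * (‖x + α • y‖ + ‖x + (starRingEnd ℂ α) • y‖) := by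
          have := norm_add_le (x + α • y) (x + (starRingEnd ℂ α) • y)
          linarith
      _ = ‖x + α • y‖ := by rw [hnorm]; ring
  · intro h t
    have := h (t : ℂ)
    rwa [Complex.coe_smul] at this
end

section
/- Let X be a complex normed space with a conjugation τ and let τ^♯ : X* → X* be defined by τ^♯(φ)(x) = conj(φ(τ(x))). Then τ^♯ is a conjugation on X*, and the restriction map from the fixed-point set (X*)^{τ^♯} to (X^τ)*, φ ↦ φ|_{X^τ}, is a surjective real-linear isometry. -/
open Complex ContinuousLinearMap


theorem stmt_14 {X : Type*} [NormedAddCommGroup X] [NormedSpace ℂ X]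
    (τ : X → X)
    (hadd : ∀ x y, τ (x + y) = τ x + τ y)
    (hconj : ∀ (c : ℂ) (x : X), τ (c • x) = (starRingEnd ℂ c) • τ x)
    (hiso : ∀ x, ‖τ x‖ = ‖x‖)
    (hinv : ∀ x, τ (τ x) = x)
    (S : Submodule ℝ X) (hS : ∀ x, x ∈ S ↔ τ x = x)
    (Ts : (X →L[ℂ] ℂ) → (X →L[ℂ] ℂ))
    (hTs : ∀ (φ : X →L[ℂ] ℂ) (x : X), Ts φ x = starRingEnd ℂ (φ (τ x))) :
    -- Ts is a conjugation on X*
    ((∀ φ ψ, Ts (φ + ψ) = Ts φ + Ts ψ) ∧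
      (∀ (c : ℂ) (φ : X →L[ℂ] ℂ), Ts (c • φ) = (starRingEnd ℂ c) • Ts φ) ∧
      (∀ φ, ‖Ts φ‖ = ‖φ‖) ∧ (∀ φ, Ts (Ts φ) = φ)) ∧
    -- the restriction map from the fixed points of Ts to (X^τ)* is a
    -- (real-linear) isometry:
    (∀ φ : X →L[ℂ] ℂ, Ts φ = φ →
      ∃ g : S →L[ℝ] ℝ, (∀ s : S, ((g s : ℝ) : ℂ) = φ (s : X)) ∧ ‖g‖ = ‖φ‖) ∧
    -- and it is surjective:
    (∀ g : S →L[ℝ] ℝ, ∃ φ : X →L[ℂ] ℂ, Ts φ = φ ∧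
      ∀ s : S, φ (s : X) = ((g s : ℝ) : ℂ)) := by 
  -- basic facts about τ
  have hneg : ∀ x, τ (-x) = -τ x := fun x => by
    have := hconj (-1) x
    simpa using this
  have hsub : ∀ x y, τ (x - y) = τ x - τ y := fun x y => by
    rw [sub_eq_add_neg, hadd, hneg, sub_eq_add_neg]
  have hrsmul : ∀ (r : ℝ) (x : X), τ (r • x) = r • τ x := fun r x => by
    rw [← Complex.coe_smul, hconj, Complex.conj_ofReal, Complex.coe_smul]
  have keymem : ∀ x : X, ((2⁻¹ : ℝ) • (x + τ x)) ∈ S := fun x =>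
    (hS _).2 (by rw [hrsmul, hadd, hinv, add_comm])
  have keymem2 : ∀ x : X, (-((2⁻¹ : ℝ) • (Complex.I • (x - τ x)))) ∈ S := fun x =>
    (hS _).2 (by
      rw [hneg, hrsmul, hconj, hsub, hinv, Complex.conj_I]
      module)
  have hinvTs : ∀ φ, Ts (Ts φ) = φ := fun φ => by
    ext x
    rw [hTs, hTs, hinv, Complex.conj_conj]
  have hle : ∀ φ, ‖Ts φ‖ ≤ ‖φ‖ := fun φ =>
    opNorm_le_bound _ (norm_nonneg φ) fun x => by
      rw [hTs]
      calc ‖(starRingEnd ℂ) (φ (τ x))‖ = ‖φ (τ x)‖ := RCLike.norm_conj _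
        _ ≤ ‖φ‖ * ‖τ x‖ := le_opNorm _ _
        _ = ‖φ‖ * ‖x‖ := by rw [hiso]
  refine ⟨⟨fun φ ψ => ?_, fun c φ => ?_, fun φ => ?_, hinvTs⟩, fun φ hfix => ?_, fun g => ?_⟩
  · ext x; simp [hTs]
  · ext x; simp [hTs, map_mul]
  · refine le_antisymm (hle φ) ?_
    calc ‖φ‖ = ‖Ts (Ts φ)‖ := by rw [hinvTs]
      _ ≤ ‖Ts φ‖ := hle _
  -- the isometry part
  · have hfixpt : ∀ x, (starRingEnd ℂ) (φ (τ x)) = φ x := fun x => by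
      rw [← hTs]; rw [hfix]
    have hreal : ∀ z : X, τ z = z → (φ z).im = 0 := fun z hz => by
      have := hfixpt z
      rw [hz] at this
      exact Complex.conj_eq_iff_im.mp this
    refine ⟨Complex.reCLM.comp ((φ.restrictScalars ℝ).comp S.subtypeL), fun s => ?_, ?_⟩
    · simp only [ContinuousLinearMap.comp_apply, Complex.reCLM_apply,
        ContinuousLinearMap.coe_restrictScalars', Submodule.subtypeL_apply]
      have h := hfixpt (s : X)
      rw [(hS _).mp s.2] at h
      exact Complex.conj_eq_iff_re.mp h
    · set g := Complex.reCLM.comp ((φ.restrictScalars ℝ).comp S.subtypeL) with hg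
      have hgs : ∀ s : S, g s = (φ (s : X)).re := fun s => rfl
      refine le_antisymm (opNorm_le_bound _ (norm_nonneg φ) fun s => ?_) ?_
      · rw [hgs]
        calc ‖(φ (s : X)).re‖ ≤ ‖φ (s : X)‖ := by
              rw [Real.norm_eq_abs]; exact Complex.abs_re_le_norm _
          _ ≤ ‖φ‖ * ‖(s : X)‖ := le_opNorm _ _
          _ = ‖φ‖ * ‖s‖ := rfl
      · refine opNorm_le_bound _ (norm_nonneg g) fun x => ?_
        by_cases hx : φ x = 0
        · rw [hx, norm_zero]
          positivity
        · set c : ℂ := (starRingEnd ℂ) (φ x) / ‖φ x‖ with hc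
          have hnc : ‖c‖ = 1 := by
            rw [hc]
            rw [norm_div, RCLike.norm_conj]
            simp [hx]
          set y : X := c • x with hy
          have hphiy : φ y = (‖φ x‖ : ℂ) := by
            have hne : ((‖φ x‖ : ℝ) : ℂ) ≠ 0 := by simpa using hx
            rw [hy, map_smul, hc, smul_eq_mul, div_mul_eq_mul_div,
              ← Complex.normSq_eq_conj_mul_self, Complex.normSq_eq_norm_sq]
            push_cast
            rw [sq, mul_div_assoc, div_self hne, mul_one]
          set a : X := (2⁻¹ : ℝ) • (y + τ y) with ha
          set b : X := -((2⁻¹ : ℝ) • (Complex.I • (y - τ y))) with hb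
          have hdecomp : y = a + Complex.I • b := by
            rw [ha, hb, smul_neg, smul_comm Complex.I (2⁻¹ : ℝ), smul_smul,
              Complex.I_mul_I, neg_one_smul]
            module
          have hphia : (φ a).im = 0 := hreal a ((hS a).mp (keymem y))
          have hphib : (φ b).im = 0 := hreal b ((hS b).mp (keymem2 y))
          have hkey : ‖φ x‖ = (φ a).re := by
            have h1 : φ y = φ a + Complex.I * φ b := by
              rw [hdecomp, map_add, φ.map_smul Complex.I b, smul_eq_mul]
            have h2 : ((‖φ x‖ : ℝ) : ℂ).re = (φ a + Complex.I * φ b).re := by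
              rw [← hphiy, h1]
            simpa [Complex.add_re, Complex.mul_re, hphib] using h2
          have hna : ‖a‖ ≤ ‖x‖ := by
            rw [ha]
            calc ‖(2⁻¹ : ℝ) • (y + τ y)‖ = 2⁻¹ * ‖y + τ y‖ := by
                  rw [norm_smul]; simp
              _ ≤ 2⁻¹ * (‖y‖ + ‖τ y‖) := by
                  gcongr; exact norm_add_le _ _
              _ = ‖y‖ := by rw [hiso]; ring
              _ = ‖x‖ := by rw [hy, norm_smul, hnc, one_mul]
          calc ‖φ x‖ = (φ a).re := hkey
            _ ≤ |(φ a).re| := le_abs_self _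
            _ = ‖g (⟨a, keymem y⟩ : S)‖ := by rw [hgs]; rfl
            _ ≤ ‖g‖ * ‖(⟨a, keymem y⟩ : S)‖ := le_opNorm _ _
            _ ≤ ‖g‖ * ‖x‖ := by
                gcongr
                exact hna
  -- surjectivity
  · set Pl : X →ₗ[ℝ] S :=
      { toFun := fun x => ⟨(2⁻¹ : ℝ) • (x + τ x), keymem x⟩
        map_add' := fun x y => by
          ext
          simp only [Submodule.coe_add]
          rw [hadd]
          module
        map_smul' := fun r x => by
          ext
          simp only [RingHom.id_apply, SetLike.val_smul]
          rw [hrsmul]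
          module } with hPl
    have hPlb : ∀ x : X, ‖Pl x‖ ≤ 1 * ‖x‖ := fun x => by
      rw [one_mul]
      show ‖(2⁻¹ : ℝ) • (x + τ x)‖ ≤ ‖x‖
      calc ‖(2⁻¹ : ℝ) • (x + τ x)‖ = 2⁻¹ * ‖x + τ x‖ := by rw [norm_smul]; simp
        _ ≤ 2⁻¹ * (‖x‖ + ‖τ x‖) := by gcongr; exact norm_add_le _ _
        _ = ‖x‖ := by rw [hiso]; ring
    set P : X →L[ℝ] S := Pl.mkContinuous 1 hPlb with hP
    set fr : X →L[ℝ] ℝ := g.comp P with hfr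
    have hfr_apply : ∀ x : X, fr x = g ⟨(2⁻¹ : ℝ) • (x + τ x), keymem x⟩ := fun x => rfl
    refine ⟨StrongDual.extendRCLike (𝕜 := ℂ) fr, ?_, fun s => ?_⟩
    · ext x
      rw [hTs]
      rw [ContinuousLinearMap.extendTo𝕜'_apply, ContinuousLinearMap.extendTo𝕜'_apply]
      have hfrτ : ∀ z : X, fr (τ z) = fr z := fun z => by
        rw [hfr_apply, hfr_apply]
        congr 1
        ext
        show (2⁻¹ : ℝ) • (τ z + τ (τ z)) = (2⁻¹ : ℝ) • (z + τ z)
        rw [hinv, add_comm]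
      have h2 : fr ((RCLike.I : ℂ) • τ x) = -fr ((RCLike.I : ℂ) • x) := by
        have hIx : ((RCLike.I : ℂ) • τ x) = -(τ ((RCLike.I : ℂ) • x)) := by
          rw [hconj]
          simp [RCLike.I_to_complex]
        rw [hIx, map_neg, hfrτ]
      rw [hfrτ, h2]
      push_cast
      rw [map_sub, map_mul]
      simp only [map_neg, Complex.conj_ofReal, RCLike.conj_ofReal, RCLike.I_to_complex, Complex.conj_I]
      ring
    · rw [ContinuousLinearMap.extendTo𝕜'_apply]
      have hts : τ (s : X) = (s : X) := (hS _).mp s.2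
      have h1 : fr (s : X) = g s := by
        rw [hfr_apply]
        congr 1
        ext
        show (2⁻¹ : ℝ) • ((s : X) + τ (s : X)) = (s : X)
        rw [hts]
        module
      have h2 : fr ((RCLike.I : ℂ) • (s : X)) = 0 := by
        have h0 : (⟨(2⁻¹ : ℝ) • ((RCLike.I : ℂ) • (s : X) + τ ((RCLike.I : ℂ) • (s : X))),
            keymem _⟩ : S) = 0 := by
          ext
          show (2⁻¹ : ℝ) • ((RCLike.I : ℂ) • (s : X) + τ ((RCLike.I : ℂ) • (s : X))) = 0
          rw [hconj, hts]
          simp [RCLike.I_to_complex, Complex.conj_I]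
        rw [hfr_apply, h0, map_zero]
      rw [h1, h2]
      simp
end

section
/- Let H, K be complex inner product spaces, x₁, x₂ ∈ H an orthonormal system, and A : H → K a real-linear orthogonality-preserving map with dense image such that A(ℂx₁) ⊆ ℂA(x₁), A(ℂx₂) ⊆ ℂA(x₂), and A(x₁) ≠ 0. Then ‖A(x₁)‖ = ‖A(x₂)‖, ‖A(i x₁)‖ = ‖A(i x₂)‖, and there is a single sign ε ∈ {+1, −1} with A(i x₁) = ε i A(x₁) and A(i x₂) = ε i A(x₂). -/
open Complex

set_option maxHeartbeats 1600000 in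
theorem stmt_19 {H K : Type*} [NormedAddCommGroup H] [InnerProductSpace ℂ H]
    [NormedAddCommGroup K] [InnerProductSpace ℂ K]
    (A : H → K)
    (hadd : ∀ x y, A (x + y) = A x + A y)
    (hreal : ∀ (t : ℝ) (x : H), A (t • x) = t • A x)
    (hdense : DenseRange A)
    (horth : ∀ x y : H, (inner ℂ x y : ℂ) = 0 → (inner ℂ (A x) (A y) : ℂ) = 0)
    (hinj : ∀ x : H, x ≠ 0 → A x ≠ 0)
    (x₁ x₂ : H) (h₁ : ‖x₁‖ = 1) (h₂ : ‖x₂‖ = 1) (h₁₂ : (inner ℂ x₁ x₂ : ℂ) = 0)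
    (hC₁ : ∀ c : ℂ, ∃ d : ℂ, A (c • x₁) = d • A x₁)
    (hC₂ : ∀ c : ℂ, ∃ d : ℂ, A (c • x₂) = d • A x₂)
    (hAx₁ : A x₁ ≠ 0) :
    ‖A x₁‖ = ‖A x₂‖ ∧ ‖A (Complex.I • x₁)‖ = ‖A (Complex.I • x₂)‖ ∧
      ∃ ε : ℂ, (ε = 1 ∨ ε = -1) ∧
        A (Complex.I • x₁) = (ε * Complex.I) • A x₁ ∧
        A (Complex.I • x₂) = (ε * Complex.I) • A x₂ := by
  have hneg : ∀ x, A (-x) = - A x := by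
    intro x
    have := hreal (-1) x
    simpa using this
  have hsub : ∀ x y, A (x - y) = A x - A y := by
    intro x y
    rw [sub_eq_add_neg, hadd, hneg, sub_eq_add_neg]
  set y₁ := A x₁ with hy₁
  set y₂ := A x₂ with hy₂
  set z₁ := A (Complex.I • x₁) with hz₁
  set z₂ := A (Complex.I • x₂) with hz₂
  have h₂₁ : (inner ℂ x₂ x₁ : ℂ) = 0 := by
    rw [← inner_conj_symm, h₁₂, map_zero]
  have hs₁ : (inner ℂ x₁ x₁ : ℂ) = 1 := by
    rw [inner_self_eq_norm_sq_to_K, h₁]; norm_num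
  have hs₂ : (inner ℂ x₂ x₂ : ℂ) = 1 := by
    rw [inner_self_eq_norm_sq_to_K, h₂]; norm_num
  -- basic orthogonality in K
  have e12 : (inner ℂ y₁ y₂ : ℂ) = 0 := horth _ _ h₁₂
  have e21 : (inner ℂ y₂ y₁ : ℂ) = 0 := horth _ _ h₂₁
  have e1z2 : (inner ℂ y₁ z₂ : ℂ) = 0 := by
    refine horth _ _ ?_
    simp [inner_smul_right, h₁₂]
  have ez2y1 : (inner ℂ z₂ y₁ : ℂ) = 0 := by
    refine horth _ _ ?_
    simp [inner_smul_left, h₂₁]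
  have e2z1 : (inner ℂ y₂ z₁ : ℂ) = 0 := by
    refine horth _ _ ?_
    simp [inner_smul_right, h₂₁]
  have ez1y2 : (inner ℂ z₁ y₂ : ℂ) = 0 := by
    refine horth _ _ ?_
    simp [inner_smul_left, h₁₂]
  have ez2z1 : (inner ℂ z₂ z₁ : ℂ) = 0 := by
    refine horth _ _ ?_
    simp [inner_smul_left, inner_smul_right, h₂₁]
  -- norm equalities
  have key1 : (inner ℂ (y₁ + y₂) (y₁ - y₂) : ℂ) = 0 := by
    rw [← hadd, ← hsub]
    refine horth _ _ ?_
    simp [inner_add_left, inner_sub_right, h₁₂, h₂₁, hs₁, hs₂, h₁, h₂]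
  have n12 : ‖y₁‖ = ‖y₂‖ := by
    have h := key1
    rw [inner_add_left, inner_sub_right, inner_sub_right, e12, e21,
      inner_self_eq_norm_sq_to_K, inner_self_eq_norm_sq_to_K] at h
    rw [sub_zero, zero_sub, add_neg_eq_zero] at h
    have h3 : ‖y₁‖^2 = ‖y₂‖^2 := by exact_mod_cast h
    nlinarith [norm_nonneg y₁, norm_nonneg y₂]
  have key2 : (inner ℂ (y₁ + z₂) (y₁ - z₂) : ℂ) = 0 := by
    rw [← hadd, ← hsub]
    refine horth _ _ ?_
    simp [inner_add_left, inner_sub_right, inner_smul_left, inner_smul_right,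
      h₁₂, h₂₁, hs₁, hs₂, Complex.conj_I, h₁, h₂]
  have n1z2 : ‖y₁‖ = ‖z₂‖ := by
    have h := key2
    rw [inner_add_left, inner_sub_right, inner_sub_right, e1z2, ez2y1,
      inner_self_eq_norm_sq_to_K, inner_self_eq_norm_sq_to_K] at h
    rw [sub_zero, zero_sub, add_neg_eq_zero] at h
    have h3 : ‖y₁‖^2 = ‖z₂‖^2 := by exact_mod_cast h
    nlinarith [norm_nonneg y₁, norm_nonneg z₂]
  have key3 : (inner ℂ (y₂ + z₁) (y₂ - z₁) : ℂ) = 0 := by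
    rw [← hadd, ← hsub]
    refine horth _ _ ?_
    simp [inner_add_left, inner_sub_right, inner_smul_left, inner_smul_right,
      h₁₂, h₂₁, hs₁, hs₂, Complex.conj_I, h₁, h₂]
  have n2z1 : ‖y₂‖ = ‖z₁‖ := by
    have h := key3
    rw [inner_add_left, inner_sub_right, inner_sub_right, e2z1, ez1y2,
      inner_self_eq_norm_sq_to_K, inner_self_eq_norm_sq_to_K] at h
    rw [sub_zero, zero_sub, add_neg_eq_zero] at h
    have h3 : ‖y₂‖^2 = ‖z₁‖^2 := by exact_mod_cast h
    nlinarith [norm_nonneg y₂, norm_nonneg z₁]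
  -- key relations
  have key7 : (inner ℂ y₁ z₁ : ℂ) = inner ℂ y₂ z₂ := by
    have h : (inner ℂ (y₁ + y₂) (z₁ - z₂) : ℂ) = 0 := by
      rw [← hadd, ← hsub]
      refine horth _ _ ?_
      simp [inner_add_left, inner_sub_right, inner_smul_right, h₁₂, h₂₁, hs₁, hs₂, h₁, h₂]
    rw [inner_add_left, inner_sub_right, inner_sub_right, e1z2, e2z1] at h
    linear_combination h
  have key8 : (inner ℂ y₁ z₁ : ℂ) + inner ℂ z₂ y₂ = 0 := by
    have h : (inner ℂ (y₁ + z₂) (z₁ + y₂) : ℂ) = 0 := by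
      rw [← hadd, ← hadd]
      refine horth _ _ ?_
      simp [inner_add_left, inner_add_right, inner_smul_left, inner_smul_right,
        h₁₂, h₂₁, hs₁, hs₂, Complex.conj_I, h₁, h₂]
    rw [inner_add_left, inner_add_right, inner_add_right, e12, ez2z1] at h
    linear_combination h
  -- scalars
  obtain ⟨d₁, hd₁⟩ := hC₁ Complex.I
  obtain ⟨d₂, hd₂⟩ := hC₂ Complex.I
  have hny₁ : ‖y₁‖ ≠ 0 := norm_ne_zero_iff.mpr hAx₁
  have hn2 : ((‖y₁‖ : ℂ))^2 ≠ 0 := by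
    simpa using hny₁
  have i1 : (inner ℂ y₁ z₁ : ℂ) = d₁ * (‖y₁‖ : ℂ)^2 := by
    rw [hz₁, hd₁, inner_smul_right, inner_self_eq_norm_sq_to_K]
    norm_cast
  have i2 : (inner ℂ y₂ z₂ : ℂ) = d₂ * (‖y₁‖ : ℂ)^2 := by
    rw [hz₂, hd₂, inner_smul_right, inner_self_eq_norm_sq_to_K, n12]
    norm_cast
  have i3 : (inner ℂ z₂ y₂ : ℂ) = (starRingEnd ℂ) d₂ * (‖y₁‖ : ℂ)^2 := by
    rw [hz₂, hd₂, inner_smul_left, inner_self_eq_norm_sq_to_K, n12]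
    norm_cast
  have hdd : d₁ = d₂ := by
    have h := key7
    rw [i1, i2] at h
    exact mul_right_cancel₀ hn2 h
  have hre : d₁ + (starRingEnd ℂ) d₁ = 0 := by
    have h := key8
    rw [i1, i3, ← hdd, ← add_mul] at h
    exact (mul_eq_zero.mp h).resolve_right hn2
  have habs : ‖d₁‖ = 1 := by
    have h : ‖z₁‖ = ‖d₁‖ * ‖y₁‖ := by
      rw [hz₁, hd₁, norm_smul]
    have h2 : ‖z₁‖ = ‖y₁‖ := by rw [← n2z1, ← n12]
    rw [h2] at h
    field_simp at h
    tauto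
  have hre0 : d₁.re = 0 := by
    have := congrArg Complex.re hre
    simp [Complex.add_re, Complex.conj_re] at this
    linarith
  have him : d₁.im = 1 ∨ d₁.im = -1 := by
    have h : ‖d₁‖ ^ 2 = 1 := by rw [habs]; norm_num
    rw [Complex.sq_norm, Complex.normSq_apply, hre0] at h
    have h3 : (d₁.im - 1) * (d₁.im + 1) = 0 := by nlinarith
    rcases mul_eq_zero.mp h3 with h' | h'
    · exact Or.inl (by linarith)
    · exact Or.inr (by linarith)
  refine ⟨n12, by rw [← n2z1, ← n12, n1z2], -Complex.I * d₁, ?_, ?_, ?_⟩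
  · rcases him with h | h
    · left
      apply Complex.ext <;> simp [hre0, h]
    · right
      apply Complex.ext <;> simp [hre0, h]
  · rw [hz₁, hd₁]
    congr 1
    ring_nf
    simp [Complex.I_sq]
  · rw [hz₂, hd₂, ← hdd]
    congr 1
    ring_nf
    simp [Complex.I_sq]
end
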